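/- arXiv:math/0601544 — 2 statements merged into one kernel-verified Lean document; each statement's English description precedes it below -/
import Mathlib

section
/- Let α ∈ (1/3, 1), let x, y : [0,2] → ℝ be α-Hölder, let A be an α-Lévy area of order 0 associated with γ = (x, y), and let f : ℝ → ℝ be of class C². Then the family I_ε^{[0,1]}(f), ε ∈ (0,1], converges as ε ↓ 0; that is, the corrected symmetric integral ∫_0^1 f(y(u)) d^{A,1}x(u) exists. -/
open MeasureTheory Filter Set

/-- `z` is `α`-Hölder on the interval `[a, b]`. -/
def HolderOnIcc (α a b : ℝ) (z : ℝ → ℝ) : Prop :=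
  ∃ L > 0, ∀ s ∈ Set.Icc a b, ∀ t ∈ Set.Icc a b, |z t - z s| ≤ L * |t - s| ^ α

/-- `A` is an `α`-Lévy area of order 0 associated with `γ = (x, y)` on `[0, 2]`. -/
def IsLevyArea0 (α : ℝ) (x y : ℝ → ℝ) (A : ℝ → ℝ → ℝ) : Prop :=
  (∀ r ∈ Set.Icc (0:ℝ) 2, ∀ s ∈ Set.Icc (0:ℝ) 2, ∀ t ∈ Set.Icc (0:ℝ) 2,
    A r s + A s t + A t r
      = -(1/2) * ((y t - y s) * (x r - x s) - (y r - y s) * (x t - x s)))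
  ∧ ∃ C > 0, ∀ s ∈ Set.Icc (0:ℝ) 2, ∀ t ∈ Set.Icc (0:ℝ) 2,
      |A s t| ≤ C * |t - s| ^ (2 * α)

/-- The `ε`-approximation `I_ε^{[a,b]}(f)` of the corrected symmetric integral. -/
noncomputable def Ieps (x y : ℝ → ℝ) (A : ℝ → ℝ → ℝ) (f : ℝ → ℝ) (a b ε : ℝ) : ℝ :=
  ε⁻¹ * (∫ u in a..b, ((f (y u) + f (y (u + ε))) / 2) * (x (u + ε) - x u))
    + ε⁻¹ * (∫ u in a..b, deriv f (y u) * A u (u + ε))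

open Topology

namespace SewAux

noncomputable def U (g : ℝ → ℝ → ℝ) (N : ℕ) (a b : ℝ) : ℝ :=
  ∑ i ∈ Finset.range N, g (a + i * (b - a) / N) (a + (i + 1) * (b - a) / N)

lemma U_zero (g : ℝ → ℝ → ℝ) (a b : ℝ) : U g 0 a b = 0 := by simp [U]

lemma U_one (g : ℝ → ℝ → ℝ) (a b : ℝ) : U g 1 a b = g a b := by
  simp only [U, Finset.sum_range_one]
  norm_num

lemma U_split' (g : ℝ → ℝ → ℝ) (k m : ℕ) (a b : ℝ) :
    U g (k + m) a b = U g k a (a + k * (b - a) / (k + m))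
      + U g m (a + k * (b - a) / (k + m)) b := by
  rcases Nat.eq_zero_or_pos k with hk0 | hk0
  · subst hk0; simp [U]
  rcases Nat.eq_zero_or_pos m with hm0 | hm0
  · subst hm0
    have hk' : ((k:ℝ)) ≠ 0 := Nat.cast_ne_zero.mpr hk0.ne'
    have : a + (k:ℝ) * (b - a) / ((k:ℝ) + (0:ℕ)) = b := by push_cast; field_simp; ring
    simp only [Nat.add_zero, U_zero, add_zero]
    rw [U, U]
    refine Finset.sum_congr rfl fun i _ => ?_
    rw [show ((k:ℝ) + ((0:ℕ):ℝ)) = (k:ℝ) by push_cast; ring] at this ⊢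
    rw [this]
  have hk' : ((k:ℝ)) ≠ 0 := Nat.cast_ne_zero.mpr hk0.ne'
  have hm' : ((m:ℝ)) ≠ 0 := Nat.cast_ne_zero.mpr hm0.ne'
  have hkm' : ((k:ℝ) + (m:ℝ)) ≠ 0 := by positivity
  rw [U, Finset.sum_range_add]
  congr 1
  · rw [U]
    refine Finset.sum_congr rfl fun i _ => ?_
    push_cast
    congr 1 <;> (field_simp; ring)
  · rw [U]
    refine Finset.sum_congr rfl fun i _ => ?_
    push_cast
    congr 1 <;> (field_simp; ring)

lemma U_split (g : ℝ → ℝ → ℝ) {N k : ℕ} (hk : k ≤ N) (a b : ℝ) :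
    U g N a b = U g k a (a + k * (b - a) / N) + U g (N - k) (a + k * (b - a) / N) b := by
  have h := U_split' g k (N - k) a b
  rw [show k + (N - k) = N by omega] at h
  rw [show (k:ℝ) + ((N-k:ℕ):ℝ) = (N:ℝ) by rw [Nat.cast_sub hk]; ring] at h
  exact h

lemma U_mul (g : ℝ → ℝ → ℝ) (M : ℕ) : ∀ (N : ℕ) (a b : ℝ),
    U g (N * M) a b = ∑ i ∈ Finset.range N,
      U g M (a + i * (b - a) / N) (a + (i + 1) * (b - a) / N) := by
  rcases Nat.eq_zero_or_pos M with hM0 | hM0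
  · subst hM0; intro N a b; simp [U_zero]
  have hM' : ((M:ℝ)) ≠ 0 := Nat.cast_ne_zero.mpr hM0.ne'
  intro N
  induction N with
  | zero => intro a b; simp [U_zero]
  | succ N ih =>
    intro a b
    have hN1 : ((N:ℝ) + 1) ≠ 0 := by positivity
    have key := U_split' g M (N * M) a b
    rw [show M + N * M = (N+1) * M by ring] at key
    have hc : a + (M:ℝ) * (b - a) / ((M:ℝ) + ((N*M : ℕ):ℝ)) = a + (b - a) / ((N:ℝ)+1) := by
      have h1 : (M:ℝ) + ((N*M : ℕ):ℝ) ≠ 0 := by push_cast; positivity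
      field_simp
      push_cast
      ring
    rw [hc] at key
    set c := a + (b - a) / ((N:ℝ)+1) with hcdef
    rw [key, ih c b, Finset.sum_range_succ', add_comm]
    congr 1
    · refine Finset.sum_congr rfl fun i hi => ?_
      have hN0 : ((N:ℝ)) ≠ 0 := by
        have : 0 < N := lt_of_le_of_lt (Nat.zero_le i) (Finset.mem_range.mp hi)
        exact Nat.cast_ne_zero.mpr this.ne'
      have hX : c + (i:ℝ) * (b - c) / (N:ℝ) = a + ((i:ℝ)+1) * (b - a) / ((N:ℝ)+1) := by
        rw [hcdef]; field_simp; ring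
      have hY : c + ((i:ℝ)+1) * (b - c) / (N:ℝ) = a + (((i:ℝ)+1)+1) * (b - a) / ((N:ℝ)+1) := by
        rw [hcdef]; field_simp; ring
      push_cast
      rw [hX, hY]
    · have h0 : a + ((0:ℕ):ℝ) * (b - a) / ((N:ℝ)+1) = a := by push_cast; ring
      have h1 : a + (((0:ℕ):ℝ) + 1) * (b - a) / ((N:ℝ)+1) = c := by
        rw [hcdef]; push_cast; ring
      push_cast at h0 h1 ⊢
      rw [h0, h1]

section Bound
variable {g : ℝ → ℝ → ℝ} {K β : ℝ}

lemma rpow_lin (hβ : 1 < β) {z w : ℝ} (hz : 0 ≤ z) (hzw : z ≤ w) :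
    z ^ β ≤ z * w ^ (β - 1) := by
  rcases eq_or_lt_of_le hz with hz0 | hz0
  · rw [← hz0, Real.zero_rpow (by linarith), zero_mul]
  · calc z ^ β = z ^ (1 + (β - 1)) := by norm_num
    _ = z * z ^ (β - 1) := by rw [Real.rpow_add hz0, Real.rpow_one]
    _ ≤ z * w ^ (β - 1) :=
        mul_le_mul_of_nonneg_left (Real.rpow_le_rpow hz hzw (by linarith)) hz

lemma U_bound (hK : 0 ≤ K) (hβ : 1 < β)
    (H1 : ∀ a b c : ℝ, 0 ≤ a → a ≤ b → b ≤ c → c ≤ 2 → |g a c - g a b - g b c| ≤ K * (c - a) ^ β) :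
    ∀ N : ℕ, 1 ≤ N → ∀ a b : ℝ, 0 ≤ a → a ≤ b → b ≤ 2 →
      |U g N a b - g a b| ≤ (K / (1 - (2/3 : ℝ) ^ (β - 1))) * (b - a) ^ β := by
  set r : ℝ := (2/3 : ℝ) ^ (β - 1) with hrdef
  have hr0 : 0 < r := Real.rpow_pos_of_pos (by norm_num) _
  have hr1 : r < 1 := Real.rpow_lt_one (by norm_num) (by norm_num) (by linarith)
  set K2 : ℝ := K / (1 - r) with hK2def
  have hK2 : 0 ≤ K2 := div_nonneg hK (by linarith)
  have h1r : (1 - r) ≠ 0 := by linarith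
  have hKid : K2 * r + K = K2 := by
    rw [hK2def]; field_simp; ring
  intro N
  induction N using Nat.strong_induction_on with
  | _ N ih =>
    intro hN1 a b ha hab hb2
    rcases eq_or_lt_of_le hN1 with h1 | h2
    · rw [← h1, U_one, sub_self, abs_zero]
      exact mul_nonneg hK2 (Real.rpow_nonneg (by linarith) _)
    · -- N ≥ 2
      have hN2 : 2 ≤ N := h2
      set k : ℕ := (N + 1) / 2 with hkdef
      have hk1 : 1 ≤ k := by omega
      have hkN : k < N := by omega
      have hNk1 : 1 ≤ N - k := by omega
      have hNkN : N - k < N := by omega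
      have h3k : 3 * k ≤ 2 * N := by omega
      have h3Nk : 3 * (N - k) ≤ 2 * N := by omega
      have hNpos : (0:ℝ) < N := by positivity
      set c : ℝ := a + k * (b - a) / N with hcdef
      have hsplit := U_split g hkN.le a b
      have hc1 : c - a = ((k:ℝ)/N) * (b - a) := by rw [hcdef]; ring
      have hc2 : b - c = (((N:ℝ)-k)/N) * (b - a) := by
        rw [hcdef]; field_simp; ring
      have hkN23 : (k:ℝ)/N ≤ 2/3 := by
        rw [div_le_div_iff₀ hNpos (by norm_num)]
        have : (3:ℝ) * k ≤ 2 * N := by exact_mod_cast h3k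
        linarith
      have hNk23 : ((N:ℝ)-k)/N ≤ 2/3 := by
        rw [div_le_div_iff₀ hNpos (by norm_num)]
        have : (3:ℝ) * ((N:ℝ) - k) ≤ 2 * N := by
          have h1 : ((N - k : ℕ):ℝ) = (N:ℝ) - k := by
            rw [Nat.cast_sub hkN.le]
          have : (3:ℝ) * ((N - k:ℕ):ℝ) ≤ 2 * N := by exact_mod_cast h3Nk
          rwa [h1] at this
        linarith
      have hkN0 : (0:ℝ) ≤ (k:ℝ)/N := by positivity
      have hNkg0 : (0:ℝ) ≤ ((N:ℝ)-k)/N := by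
        apply div_nonneg _ hNpos.le
        have : (k:ℝ) ≤ N := by exact_mod_cast hkN.le
        linarith
      have hba : 0 ≤ b - a := by linarith
      have hac : a ≤ c := by
        have : 0 ≤ c - a := hc1 ▸ mul_nonneg hkN0 hba
        linarith
      have hcb : c ≤ b := by
        have : 0 ≤ b - c := hc2 ▸ mul_nonneg hNkg0 hba
        linarith
      have hca23 : c - a ≤ (2/3) * (b - a) := by
        rw [hc1]; exact mul_le_mul_of_nonneg_right hkN23 hba
      have hbc23 : b - c ≤ (2/3) * (b - a) := by
        rw [hc2]; exact mul_le_mul_of_nonneg_right hNk23 hba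
      have ihl := ih k hkN hk1 a c ha hac (by linarith)
      have ihr := ih (N - k) hNkN hNk1 c b (by linarith) hcb hb2
      have hδ := H1 a c b ha hac hcb hb2
      rw [← hcdef] at hsplit
      -- main estimate
      have e0 : |U g N a b - g a b| ≤ K2 * (c-a)^β + K2 * (b-c)^β + K * (b-a)^β := by
        have : U g N a b - g a b =
            (U g k a c - g a c) + (U g (N-k) c b - g c b) - (g a b - g a c - g c b) := by
          rw [hsplit]; ring
        rw [this]
        calc |(U g k a c - g a c) + (U g (N-k) c b - g c b) - (g a b - g a c - g c b)|
            ≤ |(U g k a c - g a c) + (U g (N-k) c b - g c b)| + |g a b - g a c - g c b| := abs_sub _ _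
          _ ≤ |U g k a c - g a c| + |U g (N-k) c b - g c b| + |g a b - g a c - g c b| := by
              have := abs_add_le (U g k a c - g a c) (U g (N-k) c b - g c b)
              linarith
          _ ≤ K2 * (c-a)^β + K2 * (b-c)^β + K * (b-a)^β := by
              have := abs_sub_comm (g a b) (g a c + g c b)
              have hδ' : |g a b - g a c - g c b| ≤ K * (b-a)^β := hδ
              linarith
      have e1 : (c-a)^β + (b-c)^β ≤ r * (b-a)^β := by
        have w1 : (c-a)^β ≤ (c-a) * ((2/3)*(b-a)) ^ (β-1) :=
          rpow_lin hβ (by linarith) hca23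
        have w2 : (b-c)^β ≤ (b-c) * ((2/3)*(b-a)) ^ (β-1) :=
          rpow_lin hβ (by linarith) hbc23
        have w3 : ((2/3 : ℝ)*(b-a)) ^ (β-1) = r * (b-a)^(β-1) := by
          rw [Real.mul_rpow (by norm_num) hba]
        have w4 : (b-a) * (b-a)^(β-1) = (b-a)^β := by
          rcases eq_or_lt_of_le hba with h0 | h0
          · rw [← h0, Real.zero_rpow (by linarith), Real.zero_rpow (by linarith), mul_zero]
          · have h5 := Real.rpow_add h0 1 (β-1)
            rw [show (1:ℝ)+(β-1) = β by ring, Real.rpow_one] at h5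
            exact h5.symm
        calc (c-a)^β + (b-c)^β
            ≤ (c-a) * ((2/3)*(b-a)) ^ (β-1) + (b-c) * ((2/3)*(b-a)) ^ (β-1) := add_le_add w1 w2
          _ = (b-a) * ((2/3)*(b-a)) ^ (β-1) := by ring
          _ = r * (b-a)^β := by rw [w3, ← w4]; ring
      calc |U g N a b - g a b| ≤ K2 * (c-a)^β + K2 * (b-c)^β + K * (b-a)^β := e0
        _ = K2 * ((c-a)^β + (b-c)^β) + K * (b-a)^β := by ring
        _ ≤ K2 * (r * (b-a)^β) + K * (b-a)^β := by
            exact add_le_add (mul_le_mul_of_nonneg_left e1 hK2) le_rfl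
        _ = (K2 * r + K) * (b-a)^β := by ring
        _ = K2 * (b-a)^β := by rw [hKid]

end Bound

theorem sewing {g : ℝ → ℝ → ℝ} {K β : ℝ} (hK : 0 ≤ K) (hβ : 1 < β)
    (H1 : ∀ a b c : ℝ, 0 ≤ a → a ≤ b → b ≤ c → c ≤ 2 → |g a c - g a b - g b c| ≤ K * (c - a) ^ β)
    (hgc : ContinuousOn (fun p : ℝ × ℝ => g p.1 p.2) (Icc (0:ℝ) 2 ×ˢ Icc (0:ℝ) 2)) :
    ∃ Φ : ℝ → ℝ, Continuous Φ ∧ ∃ K2 : ℝ, 0 ≤ K2 ∧ ∀ s t : ℝ, 0 ≤ s → s ≤ t → t ≤ 2 →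
      |Φ t - Φ s - g s t| ≤ K2 * (t - s) ^ β := by
  have hβ0 : (0:ℝ) < β := by linarith
  set K2 : ℝ := K / (1 - (2/3 : ℝ) ^ (β - 1)) with hK2def
  have hr1 : (2/3 : ℝ) ^ (β - 1) < 1 := Real.rpow_lt_one (by norm_num) (by norm_num) (by linarith)
  have hK2 : 0 ≤ K2 := div_nonneg hK (by linarith)
  have hUb := U_bound hK hβ H1
  -- g vanishes on the diagonal
  have g_self : ∀ a : ℝ, 0 ≤ a → a ≤ 2 → g a a = 0 := by
    intro a ha ha2
    have h := H1 a a a ha le_rfl le_rfl ha2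
    have e : g a a - g a a - g a a = -(g a a) := by ring
    rw [e, abs_neg, sub_self, Real.zero_rpow hβ0.ne', mul_zero] at h
    exact abs_eq_zero.mp (le_antisymm h (abs_nonneg _))
  have U_self : ∀ (N : ℕ) (a : ℝ), 0 ≤ a → a ≤ 2 → U g N a a = 0 := by
    intro N a ha ha2
    rw [U]
    apply Finset.sum_eq_zero
    intro i _
    have h1 : a + (i:ℝ) * (a - a) / N = a := by ring
    have h2 : a + ((i:ℝ) + 1) * (a - a) / N = a := by ring
    rw [h1, h2]
    exact g_self a ha ha2
  -- Cauchy-type estimate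
  have hUc : ∀ N M : ℕ, 1 ≤ N → 1 ≤ M → ∀ a b : ℝ, 0 ≤ a → a ≤ b → b ≤ 2 →
      |U g (N*M) a b - U g N a b| ≤ K2 * (b-a)^β * (N:ℝ)^(1-β) := by
    intro N M hN hM a b ha hab hb2
    have hNpos : (0:ℝ) < N := by positivity
    have hba : (0:ℝ) ≤ b - a := by linarith
    have key : U g (N*M) a b - U g N a b = ∑ i ∈ Finset.range N,
        (U g M (a + i * (b - a) / N) (a + (i + 1) * (b - a) / N)
          - g (a + i * (b - a) / N) (a + (i + 1) * (b - a) / N)) := by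
      rw [U_mul, U, Finset.sum_sub_distrib]
    rw [key]
    have hterm : ∀ i ∈ Finset.range N,
        |U g M (a + i * (b - a) / N) (a + (i + 1) * (b - a) / N)
          - g (a + i * (b - a) / N) (a + (i + 1) * (b - a) / N)| ≤ K2 * ((b-a)/N)^β := by
      intro i hi
      have hiN : (i:ℝ) + 1 ≤ N := by
        have : i + 1 ≤ N := Finset.mem_range.mp hi
        exact_mod_cast this
      have hp1 : (0:ℝ) ≤ a + i * (b - a) / N := by positivity
      have hstep : a + ((i:ℝ) + 1) * (b - a) / N - (a + i * (b - a) / N) = (b-a)/N := by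
        field_simp; ring
      have hord : a + (i:ℝ) * (b - a) / N ≤ a + ((i:ℝ) + 1) * (b - a) / N := by
        have : (0:ℝ) ≤ (b-a)/N := by positivity
        linarith [hstep]
      have hub : a + ((i:ℝ) + 1) * (b - a) / N ≤ b := by
        rw [add_comm, ← le_sub_iff_add_le, div_le_iff₀ hNpos]
        nlinarith
      have := hUb M hM (a + i * (b - a) / N) (a + ((i:ℝ) + 1) * (b - a) / N)
        hp1 hord (le_trans hub hb2)
      rw [hstep] at this
      exact_mod_cast this
    calc |∑ i ∈ Finset.range N, _| ≤ ∑ i ∈ Finset.range N, _ := Finset.abs_sum_le_sum_abs _ _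
      _ ≤ ∑ _i ∈ Finset.range N, K2 * ((b-a)/N)^β := Finset.sum_le_sum hterm
      _ = (N:ℝ) * (K2 * ((b-a)/N)^β) := by
          rw [Finset.sum_const, Finset.card_range]; ring
      _ = K2 * (b-a)^β * (N:ℝ)^(1-β) := by
          rw [Real.div_rpow hba hNpos.le, Real.rpow_sub hNpos, Real.rpow_one]
          ring
  -- existence of the limit
  have step_lim : ∀ a b : ℝ, ∃ L : ℝ, 0 ≤ a → a ≤ b → b ≤ 2 →
      Tendsto (fun N => U g N a b) atTop (𝓝 L) := by
    intro a b
    by_cases h : 0 ≤ a ∧ a ≤ b ∧ b ≤ 2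
    · obtain ⟨ha, hab, hb2⟩ := h
      have hba : (0:ℝ) ≤ b - a := by linarith
      have hcs : CauchySeq (fun n : ℕ => U g (n+1) a b) := by
        apply cauchySeq_of_le_tendsto_0 (fun N : ℕ => 2 * (K2 * (b-a)^β) * ((N:ℝ)+1)^(1-β))
        · intro n m N hn hm
          have h1 := hUc (n+1) (m+1) (by omega) (by omega) a b ha hab hb2
          have h2 := hUc (m+1) (n+1) (by omega) (by omega) a b ha hab hb2
          rw [show (m+1)*(n+1) = (n+1)*(m+1) by ring] at h2
          have hmono : ∀ j : ℕ, N ≤ j → ((j:ℝ)+1)^(1-β) ≤ ((N:ℝ)+1)^(1-β) := by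
            intro j hj
            apply Real.rpow_le_rpow_of_nonpos (by positivity) _ (by linarith)
            have : (N:ℝ) ≤ j := by exact_mod_cast hj
            linarith
          have hb1 : K2 * (b-a)^β * ((n:ℝ)+1)^(1-β) ≤ K2 * (b-a)^β * ((N:ℝ)+1)^(1-β) :=
            mul_le_mul_of_nonneg_left (hmono n hn)
              (mul_nonneg hK2 (Real.rpow_nonneg hba _))
          have hb2' : K2 * (b-a)^β * ((m:ℝ)+1)^(1-β) ≤ K2 * (b-a)^β * ((N:ℝ)+1)^(1-β) :=
            mul_le_mul_of_nonneg_left (hmono m hm)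
              (mul_nonneg hK2 (Real.rpow_nonneg hba _))
          have hcast : ∀ j : ℕ, (((j+1:ℕ)):ℝ) = (j:ℝ)+1 := by intro j; push_cast; ring
          rw [Real.dist_eq]
          have tri : |U g (n+1) a b - U g (m+1) a b|
              ≤ |U g ((n+1)*(m+1)) a b - U g (n+1) a b|
                + |U g ((n+1)*(m+1)) a b - U g (m+1) a b| := by
            have e : U g (n+1) a b - U g (m+1) a b =
                (U g ((n+1)*(m+1)) a b - U g (m+1) a b)
                - (U g ((n+1)*(m+1)) a b - U g (n+1) a b) := by ring
            rw [e]
            have := abs_sub (U g ((n+1)*(m+1)) a b - U g (m+1) a b)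
              (U g ((n+1)*(m+1)) a b - U g (n+1) a b)
            linarith
          calc |U g (n+1) a b - U g (m+1) a b|
              ≤ |U g ((n+1)*(m+1)) a b - U g (n+1) a b|
                + |U g ((n+1)*(m+1)) a b - U g (m+1) a b| := tri
            _ ≤ K2 * (b-a)^β * ((n:ℝ)+1)^(1-β) + K2 * (b-a)^β * ((m:ℝ)+1)^(1-β) := by
                rw [← hcast n, ← hcast m]
                exact add_le_add h1 h2
            _ ≤ 2 * (K2 * (b-a)^β) * ((N:ℝ)+1)^(1-β) := by linarith
        · have h0 : Tendsto (fun N : ℕ => ((N:ℝ)+1)^(1-β)) atTop (𝓝 0) := by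
            rw [show (1-β) = -(β-1) by ring]
            exact (tendsto_rpow_neg_atTop (by linarith)).comp
              (Filter.tendsto_atTop_add_const_right atTop 1 tendsto_natCast_atTop_atTop)
          have := h0.const_mul (2 * (K2 * (b-a)^β))
          rwa [mul_zero] at this
      obtain ⟨L, hL⟩ := cauchySeq_tendsto_of_complete hcs
      exact ⟨L, fun _ _ _ => (Filter.tendsto_add_atTop_iff_nat 1).mp hL⟩
    · exact ⟨0, fun h1 h2 h3 => absurd ⟨h1, h2, h3⟩ h⟩
  choose I hI using step_lim
  have hImul : ∀ (N : ℕ), 1 ≤ N → ∀ a b : ℝ, 0 ≤ a → a ≤ b → b ≤ 2 →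
      Tendsto (fun M => U g (N*M) a b) atTop (𝓝 (I a b)) := by
    intro N hN a b ha hab hb2
    have hNpos : 0 < N := hN
    exact (hI a b ha hab hb2).comp
      (tendsto_atTop_mono (fun M => Nat.le_mul_of_pos_left M hNpos) tendsto_id)
  have hIbound : ∀ (N : ℕ), 1 ≤ N → ∀ a b : ℝ, 0 ≤ a → a ≤ b → b ≤ 2 →
      |I a b - U g N a b| ≤ K2 * (b-a)^β * (N:ℝ)^(1-β) := by
    intro N hN a b ha hab hb2
    have T : Tendsto (fun M => |U g (N*M) a b - U g N a b|) atTop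
        (𝓝 |I a b - U g N a b|) :=
      ((hImul N hN a b ha hab hb2).sub tendsto_const_nhds).abs
    exact le_of_tendsto T ((eventually_ge_atTop 1).mono fun M hM =>
      hUc N M hN hM a b ha hab hb2)
  have hIg : ∀ a b : ℝ, 0 ≤ a → a ≤ b → b ≤ 2 → |I a b - g a b| ≤ K2 * (b-a)^β := by
    intro a b ha hab hb2
    have := hIbound 1 le_rfl a b ha hab hb2
    rw [U_one] at this
    simpa using this
  have hIself : ∀ a : ℝ, 0 ≤ a → a ≤ 2 → I a a = 0 := by
    intro a ha ha2
    have h1 := hI a a ha le_rfl ha2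
    have h2 : Tendsto (fun N => U g N a a) atTop (𝓝 (0:ℝ)) := by
      have : (fun N => U g N a a) = fun _ => (0:ℝ) := by
        funext N; exact U_self N a ha ha2
      rw [this]; exact tendsto_const_nhds
    exact tendsto_nhds_unique h1 h2
  have hIadd : ∀ (N k : ℕ), 1 ≤ N → k ≤ N → ∀ a b : ℝ, 0 ≤ a → a ≤ b → b ≤ 2 →
      I a b = I a (a + k*(b-a)/N) + I (a + k*(b-a)/N) b := by
    intro N k hN hkN a b ha hab hb2
    have hNpos : (0:ℝ) < N := Nat.cast_pos.mpr hN
    have hba : (0:ℝ) ≤ b - a := by linarith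
    set c : ℝ := a + k*(b-a)/N with hcdef
    have hkN' : (k:ℝ) ≤ N := by exact_mod_cast hkN
    have hac : a ≤ c := by
      rw [hcdef]
      have : 0 ≤ (k:ℝ)*(b-a)/N := by positivity
      linarith
    have hcb : c ≤ b := by
      rw [hcdef, add_comm, ← le_sub_iff_add_le, div_le_iff₀ hNpos]
      nlinarith
    have hc2 : c ≤ 2 := le_trans hcb hb2
    have hc0 : 0 ≤ c := le_trans ha hac
    rcases Nat.eq_zero_or_pos k with hk0 | hk0
    · subst hk0
      have hca : c = a := by rw [hcdef]; push_cast; ring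
      rw [hca, hIself a ha (le_trans hab hb2), zero_add]
    rcases eq_or_lt_of_le hkN with hkN2 | hkN2
    · subst hkN2
      have hcb' : c = b := by rw [hcdef]; field_simp; ring
      rw [hcb', hIself b (le_trans ha hab) hb2, add_zero]
    -- main case 1 ≤ k < N
    have T0 := hImul N hN a b ha hab hb2
    have T1 := hImul k hk0 a c ha hac hc2
    have T2 := hImul (N-k) (by omega) c b hc0 hcb hb2
    have key : ∀ M : ℕ, U g (N*M) a b = U g (k*M) a c + U g ((N-k)*M) c b := by
      intro M
      rcases Nat.eq_zero_or_pos M with hM0 | hM0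
      · subst hM0; simp [Nat.mul_zero, U]
      have hM' : ((M:ℝ)) ≠ 0 := Nat.cast_ne_zero.mpr hM0.ne'
      have hsp := U_split g (Nat.mul_le_mul_right M hkN) a b
      have harg : a + ((k*M : ℕ):ℝ) * (b - a) / ((N*M : ℕ):ℝ) = c := by
        rw [hcdef]
        push_cast
        field_simp
      rw [harg] at hsp
      rw [← Nat.sub_mul] at hsp
      exact hsp
    have : Tendsto (fun M => U g (N*M) a b) atTop (𝓝 (I a c + I c b)) := by
      have := T1.add T2
      apply Tendsto.congr _ this
      intro M
      exact (key M).symm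
    exact tendsto_nhds_unique T0 this
  -- continuity of the uniform sums in the endpoint
  have hUcont : ∀ N : ℕ, ContinuousOn (fun t => U g N 0 t) (Icc (0:ℝ) 2) := by
    intro N
    apply continuousOn_finset_sum
    intro i hi
    have hiN : i + 1 ≤ N := Finset.mem_range.mp hi
    have hNpos : (0:ℝ) < N := Nat.cast_pos.mpr (by omega)
    have hmem : ∀ (j : ℕ), j ≤ N → ∀ t ∈ Icc (0:ℝ) 2, (0:ℝ) + j * (t - 0) / N ∈ Icc (0:ℝ) 2 := by
      intro j hj t ht
      have hj' : (j:ℝ) ≤ N := by exact_mod_cast hj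
      constructor
      · have : 0 ≤ (j:ℝ) * (t - 0) / N := by
          apply div_nonneg _ hNpos.le
          exact mul_nonneg (Nat.cast_nonneg j) (by linarith [ht.1])
        linarith
      · have h1 : (j:ℝ) * (t - 0) / N ≤ t := by
          rw [div_le_iff₀ hNpos]
          nlinarith [ht.1]
        linarith [ht.2]
    apply ContinuousOn.comp hgc
      (f := fun t : ℝ => ((0:ℝ) + i * (t - 0) / N, (0:ℝ) + (i+1) * (t - 0) / N))
    · apply Continuous.continuousOn
      fun_prop
    · intro t ht
      refine ⟨hmem i (by omega) t ht, ?_⟩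
      have := hmem (i+1) hiN t ht
      push_cast at this
      exact this
  -- continuity of Φ := I 0 ·
  have hPhicont : ContinuousOn (fun t => I 0 t) (Icc (0:ℝ) 2) := by
    have huni : TendstoUniformlyOn (fun N t => U g N 0 t) (fun t => I 0 t) atTop (Icc (0:ℝ) 2) := by
      rw [Metric.tendstoUniformlyOn_iff]
      intro ε hε
      have h0 : Tendsto (fun N : ℕ => K2 * 2^β * (N:ℝ)^(1-β)) atTop (𝓝 0) := by
        have h1 : Tendsto (fun N : ℕ => ((N:ℝ))^(1-β)) atTop (𝓝 0) := by
          rw [show (1-β) = -(β-1) by ring]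
          exact (tendsto_rpow_neg_atTop (by linarith)).comp tendsto_natCast_atTop_atTop
        have := h1.const_mul (K2 * 2^β)
        rwa [mul_zero] at this
      filter_upwards [h0.eventually_lt_const hε, eventually_ge_atTop 1] with N hN1 hN2
      intro t ht
      rw [Real.dist_eq]
      calc |I 0 t - U g N 0 t| ≤ K2 * (t-0)^β * (N:ℝ)^(1-β) :=
            hIbound N hN2 0 t le_rfl ht.1 ht.2
        _ ≤ K2 * 2^β * (N:ℝ)^(1-β) := by
            apply mul_le_mul_of_nonneg_right _ (Real.rpow_nonneg (Nat.cast_nonneg N) _)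
            apply mul_le_mul_of_nonneg_left _ hK2
            apply Real.rpow_le_rpow (by linarith [ht.1]) (by linarith [ht.2]) (by linarith)
        _ < ε := hN1
    exact huni.continuousOn (Frequently.of_forall hUcont)
  have hinc : ∀ s t : ℝ, 0 ≤ s → s ≤ t → t ≤ 2 → |I 0 t - I 0 s - g s t| ≤ K2 * (t-s)^β := by
    intro s t hs0 hst ht2
    rcases eq_or_lt_of_le hst with heq | hlt
    · subst heq
      rw [show I 0 s - I 0 s - g s s = -(g s s) by ring, g_self s hs0 ht2, neg_zero, abs_zero]
      exact mul_nonneg hK2 (Real.rpow_nonneg (by linarith) _)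
    · have ht0 : 0 < t := lt_of_le_of_lt hs0 hlt
      -- the approximating points
      set c : ℕ → ℝ := fun N => 0 + (Nat.floor ((N:ℝ)*s/t) : ℝ) * (t - 0) / N with hcdef
      have hcprop : ∀ N : ℕ, 1 ≤ N → c N ≤ s ∧ s - t/N ≤ c N ∧
          I 0 t = I 0 (c N) + I (c N) t := by
        intro N hN
        have hNpos : (0:ℝ) < N := Nat.cast_pos.mpr hN
        set k : ℕ := Nat.floor ((N:ℝ)*s/t) with hkdef
        have hfl : (k:ℝ) ≤ (N:ℝ)*s/t := Nat.floor_le (by positivity)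
        have hfl2 : (N:ℝ)*s/t < (k:ℝ) + 1 := Nat.lt_floor_add_one _
        have hkN : k ≤ N := by
          have h1 : (N:ℝ)*s/t ≤ N := by
            rw [div_le_iff₀ ht0]
            nlinarith
          have : (k:ℝ) ≤ (N:ℝ) := le_trans hfl h1
          exact_mod_cast this
        have hcs : c N ≤ s := by
          rw [hcdef]
          simp only [zero_add, sub_zero]
          rw [div_le_iff₀ hNpos]
          rw [le_div_iff₀ ht0] at hfl
          nlinarith
        have hsc : s - t/N ≤ c N := by
          rw [hcdef]
          simp only [zero_add, sub_zero]
          rw [div_lt_iff₀ ht0] at hfl2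
          rw [sub_le_iff_le_add, ← add_div, le_div_iff₀ hNpos]
          nlinarith
        have hadd := hIadd N k hN hkN 0 t le_rfl (le_of_lt ht0) ht2
        refine ⟨hcs, hsc, ?_⟩
        rw [hcdef]
        exact hadd
      have hctend : Tendsto c atTop (𝓝 s) := by
        apply tendsto_of_tendsto_of_tendsto_of_le_of_le'
          (g := fun N : ℕ => s - t * (N:ℝ)⁻¹) (h := fun _ : ℕ => s)
        · have h1 : Tendsto (fun N : ℕ => t * ((N:ℝ))⁻¹) atTop (𝓝 0) := by
            have := tendsto_inv_atTop_nhds_zero_nat.const_mul t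
            rwa [mul_zero] at this
          have h2 : Tendsto (fun N : ℕ => s - t * ((N:ℝ))⁻¹) atTop (𝓝 (s - 0)) :=
            tendsto_const_nhds.sub h1
          rwa [sub_zero] at h2
        · exact tendsto_const_nhds
        · filter_upwards [eventually_ge_atTop 1] with N hN
          have := (hcprop N hN).2.1
          rw [div_eq_mul_inv] at this
          exact this
        · filter_upwards [eventually_ge_atTop 1] with N hN
          exact (hcprop N hN).1
      have hcmem : ∀ N : ℕ, 1 ≤ N → c N ∈ Icc (0:ℝ) 2 := by
        intro N hN
        have h1 := (hcprop N hN).1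
        have hNpos : (0:ℝ) < N := Nat.cast_pos.mpr hN
        constructor
        · rw [hcdef]
          simp only [zero_add, sub_zero]
          positivity
        · exact le_trans h1 (le_trans hst ht2)
      -- three tendsto facts
      have T1 : Tendsto (fun N => |I 0 (c N) - I 0 s|) atTop (𝓝 0) := by
        have hPhis : ContinuousWithinAt (fun u => I 0 u) (Icc (0:ℝ) 2) s :=
          hPhicont s ⟨hs0, le_trans hst ht2⟩
        have hcin : Tendsto c atTop (𝓝[Icc (0:ℝ) 2] s) := by
          rw [tendsto_nhdsWithin_iff]
          exact ⟨hctend, (eventually_ge_atTop 1).mono hcmem⟩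
        have := (hPhis.tendsto.comp hcin).sub (tendsto_const_nhds (x := I 0 s))
        rw [sub_self] at this
        have habs := this.abs
        rwa [abs_zero] at habs
      have T2 : Tendsto (fun N => K2 * (t - c N)^β) atTop (𝓝 (K2 * (t-s)^β)) := by
        have hbase : Tendsto (fun N => t - c N) atTop (𝓝 (t - s)) :=
          tendsto_const_nhds.sub hctend
        have hrp : ContinuousAt (fun z : ℝ => z ^ β) (t - s) :=
          Real.continuousAt_rpow_const _ _ (Or.inl (by linarith))
        exact (hrp.tendsto.comp hbase).const_mul K2
      have T3 : Tendsto (fun N => |g (c N) t - g s t|) atTop (𝓝 0) := by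
        have hst2 : (s, t) ∈ Icc (0:ℝ) 2 ×ˢ Icc (0:ℝ) 2 :=
          ⟨⟨hs0, le_trans hst ht2⟩, ⟨le_of_lt ht0, ht2⟩⟩
        have hgat : ContinuousWithinAt (fun p : ℝ × ℝ => g p.1 p.2)
            (Icc (0:ℝ) 2 ×ˢ Icc (0:ℝ) 2) (s, t) := hgc (s, t) hst2
        have hpair : Tendsto (fun N => (c N, t)) atTop
            (𝓝[Icc (0:ℝ) 2 ×ˢ Icc (0:ℝ) 2] (s, t)) := by
          rw [tendsto_nhdsWithin_iff]
          constructor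
          · exact hctend.prodMk_nhds tendsto_const_nhds
          · filter_upwards [eventually_ge_atTop 1] with N hN
            exact ⟨hcmem N hN, ⟨le_of_lt ht0, ht2⟩⟩
        have := (hgat.tendsto.comp hpair).sub (tendsto_const_nhds (x := g s t))
        rw [sub_self] at this
        have habs := this.abs
        rwa [abs_zero] at habs
      have Tall : Tendsto (fun N => |I 0 (c N) - I 0 s| + K2 * (t - c N)^β + |g (c N) t - g s t|)
          atTop (𝓝 (K2 * (t-s)^β)) := by
        have := (T1.add T2).add T3
        rwa [zero_add, add_zero] at this
      apply ge_of_tendsto Tall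
      filter_upwards [eventually_ge_atTop 1] with N hN
      obtain ⟨hcs, hsc, hadd⟩ := hcprop N hN
      have hc0 : 0 ≤ c N := (hcmem N hN).1
      have hct : c N ≤ t := le_trans hcs hst
      have hmid := hIg (c N) t hc0 hct ht2
      have e : I 0 t - I 0 s - g s t =
          (I 0 (c N) - I 0 s) + (I (c N) t - g (c N) t) + (g (c N) t - g s t) := by
        rw [hadd]; ring
      rw [e]
      calc |(I 0 (c N) - I 0 s) + (I (c N) t - g (c N) t) + (g (c N) t - g s t)|
          ≤ |(I 0 (c N) - I 0 s) + (I (c N) t - g (c N) t)| + |g (c N) t - g s t| := abs_add_le _ _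
        _ ≤ |I 0 (c N) - I 0 s| + |I (c N) t - g (c N) t| + |g (c N) t - g s t| := by
            have := abs_add_le (I 0 (c N) - I 0 s) (I (c N) t - g (c N) t)
            linarith
        _ ≤ |I 0 (c N) - I 0 s| + K2 * (t - c N)^β + |g (c N) t - g s t| := by linarith
  -- conclusion: clamp to get a globally continuous function
  have hπcont : Continuous (fun v : ℝ => min 2 (max 0 v)) :=
    continuous_const.min (continuous_const.max continuous_id)
  have hπmem : ∀ v : ℝ, min 2 (max 0 v) ∈ Icc (0:ℝ) 2 := by
    intro v
    constructor
    · exact le_min (by norm_num) (le_max_left 0 v)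
    · exact min_le_left _ _
  have hπeq : ∀ v ∈ Icc (0:ℝ) 2, min 2 (max 0 v) = v := by
    intro v hv
    rw [max_eq_right hv.1, min_eq_right hv.2]
  refine ⟨fun v => I 0 (min 2 (max 0 v)), hPhicont.comp_continuous hπcont hπmem, K2, hK2, ?_⟩
  intro s t hs0 hst ht2
  simp only
  rw [hπeq s ⟨hs0, le_trans hst ht2⟩, hπeq t ⟨le_trans hs0 hst, ht2⟩]
  exact hinc s t hs0 hst ht2


lemma tendsto_abs_rpow_zero {γ : ℝ} (hγ : 0 < γ) :
    Tendsto (fun z : ℝ => |z| ^ γ) (𝓝 0) (𝓝 0) := by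
  have h := (Real.continuousAt_rpow_const 0 γ (Or.inr hγ.le)).tendsto
  rw [Real.zero_rpow hγ.ne'] at h
  have habs : Tendsto (fun z : ℝ => |z|) (𝓝 (0:ℝ)) (𝓝 (0:ℝ)) := by
    have := continuous_abs.tendsto (0:ℝ)
    rwa [abs_zero] at this
  exact h.comp habs

lemma holder_continuousOn {α : ℝ} (hα : 0 < α) {z : ℝ → ℝ} (hz : HolderOnIcc α 0 2 z) :
    ContinuousOn z (Icc (0:ℝ) 2) := by
  obtain ⟨L, hL0, hL⟩ := hz
  intro s hs
  rw [ContinuousWithinAt, tendsto_iff_dist_tendsto_zero]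
  apply squeeze_zero' (f := fun t => dist (z t) (z s))
    (g := fun t => L * |t - s| ^ α)
  · exact Eventually.of_forall fun t => dist_nonneg
  · filter_upwards [self_mem_nhdsWithin] with t ht
    rw [Real.dist_eq]
    exact hL s hs t ht
  · have h1 : Tendsto (fun t : ℝ => t - s) (𝓝[Icc (0:ℝ) 2] s) (𝓝 0) := by
      have h2 : Tendsto (fun t : ℝ => t - s) (𝓝 s) (𝓝 (s - s)) :=
        (continuous_id.sub continuous_const).tendsto s
      rw [sub_self] at h2
      exact h2.mono_left nhdsWithin_le_nhds
    have := ((tendsto_abs_rpow_zero hα).comp h1).const_mul L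
    rwa [mul_zero] at this

end SewAux

open SewAux in
set_option maxHeartbeats 2000000 in
theorem stmt_0 (α : ℝ) (hα : α ∈ Set.Ioo (1/3 : ℝ) 1)
    (x y : ℝ → ℝ) (hx : HolderOnIcc α 0 2 x) (hy : HolderOnIcc α 0 2 y)
    (A : ℝ → ℝ → ℝ) (hA : IsLevyArea0 α x y A)
    (f : ℝ → ℝ) (hf : ContDiff ℝ 2 f) :
    ∃ I : ℝ, Filter.Tendsto (fun ε => Ieps x y A f 0 1 ε)
      (nhdsWithin 0 (Set.Ioi 0)) (nhds I) := by
  obtain ⟨Lx, hLx0, hLx⟩ := hx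
  obtain ⟨Ly, hLy0, hLy⟩ := hy
  obtain ⟨hChen, C, hC0, hC⟩ := hA
  have hα0 : (0:ℝ) < α := lt_trans (by norm_num) hα.1
  have hβ : (1:ℝ) < 3 * α := by nlinarith [hα.1]
  -- basic facts about A
  have hAself : ∀ s ∈ Icc (0:ℝ) 2, A s s = 0 := by
    intro s hs
    have h := hChen s hs s hs s hs
    ring_nf at h
    linarith
  have hAsym : ∀ s ∈ Icc (0:ℝ) 2, ∀ t ∈ Icc (0:ℝ) 2, A t s = - A s t := by
    intro s hs t ht
    have h := hChen s hs s hs t ht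
    have h0 := hAself s hs
    ring_nf at h
    linarith
  have hchen' : ∀ r ∈ Icc (0:ℝ) 2, ∀ m ∈ Icc (0:ℝ) 2, ∀ t ∈ Icc (0:ℝ) 2,
      A r t = A r m + A m t + (1/2) * ((y t - y m) * (x r - x m) - (y r - y m) * (x t - x m)) := by
    intro r hr m hm t ht
    have h := hChen r hr m hm t ht
    have h2 := hAsym r hr t ht
    linarith
  -- continuity of x and y
  have hxc : ContinuousOn x (Icc (0:ℝ) 2) := holder_continuousOn hα0 ⟨Lx, hLx0, hLx⟩
  have hyc : ContinuousOn y (Icc (0:ℝ) 2) := holder_continuousOn hα0 ⟨Ly, hLy0, hLy⟩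
  -- uniform bounds on increments
  have habs2 : ∀ u ∈ Icc (0:ℝ) 2, ∀ v ∈ Icc (0:ℝ) 2, |v - u| ^ α ≤ 2 ^ α := by
    intro u hu v hv
    apply Real.rpow_le_rpow (abs_nonneg _) _ hα0.le
    rw [abs_sub_le_iff]
    constructor <;> linarith [hu.1, hu.2, hv.1, hv.2]
  have hxB : ∀ u ∈ Icc (0:ℝ) 2, ∀ v ∈ Icc (0:ℝ) 2, |x v - x u| ≤ Lx * 2 ^ α := by
    intro u hu v hv
    exact le_trans (hLx u hu v hv) (mul_le_mul_of_nonneg_left (habs2 u hu v hv) hLx0.le)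
  have hyB : ∀ u ∈ Icc (0:ℝ) 2, ∀ v ∈ Icc (0:ℝ) 2, |y v - y u| ≤ Ly * 2 ^ α := by
    intro u hu v hv
    exact le_trans (hLy u hu v hv) (mul_le_mul_of_nonneg_left (habs2 u hu v hv) hLy0.le)
  -- range of y
  set R : ℝ := |y 0| + Ly * 2 ^ α with hRdef
  have hyR : ∀ u ∈ Icc (0:ℝ) 2, y u ∈ Icc (-R) R := by
    intro u hu
    have h1 : |y u - y 0| ≤ Ly * 2 ^ α := hyB 0 (by norm_num) u hu
    have h6 : |y u| ≤ R := by
      calc |y u| = |y 0 + (y u - y 0)| := by ring_nf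
        _ ≤ |y 0| + |y u - y 0| := abs_add_le _ _
        _ ≤ R := by rw [hRdef]; linarith
    exact abs_le.mp h6
  -- bounds on f″ on the range
  have hf1 : ContDiff ℝ 1 (deriv f) := ContDiff.iterate_deriv' 1 1 hf
  have hfc : Continuous f := hf.continuous
  have hf'c : Continuous (deriv f) := hf.continuous_deriv (by norm_num)
  have hf''c : Continuous (deriv (deriv f)) := hf1.continuous_deriv le_rfl
  obtain ⟨M0, hM0⟩ := (isCompact_Icc (a := -R) (b := R)).exists_bound_of_continuousOn
    hf''c.continuousOn
  set M2 : ℝ := max M0 0 with hM2def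
  have hM2nn : 0 ≤ M2 := le_max_right _ _
  have hM2 : ∀ z ∈ Icc (-R) R, |deriv (deriv f) z| ≤ M2 :=
    fun z hz => le_trans (hM0 z hz) (le_max_left _ _)
  -- Lipschitz bound for f′ on the range
  have hLip : ∀ p ∈ Icc (-R) R, ∀ q ∈ Icc (-R) R, |deriv f q - deriv f p| ≤ M2 * |q - p| := by
    intro p hp q hq
    have := Convex.norm_image_sub_le_of_norm_deriv_le (f := deriv f)
      (fun z _ => (hf1.differentiable one_ne_zero).differentiableAt)
      (fun z hz => hM2 z hz) (convex_Icc _ _) hp hq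
    simpa [Real.norm_eq_abs] using this
  -- Taylor bound
  have hTay : ∀ p ∈ Icc (-R) R, ∀ q ∈ Icc (-R) R,
      |f q - f p - deriv f p * (q - p)| ≤ M2 * |q - p| * |q - p| := by
    intro p hp q hq
    have habs : ∀ z ∈ uIcc p q, |z - p| ≤ |q - p| := by
      intro z hz
      rcases le_total p q with h | h
      · rw [uIcc_of_le h] at hz
        rw [abs_of_nonneg (by linarith [hz.1]), abs_of_nonneg (by linarith)]
        linarith [hz.2]
      · rw [uIcc_of_ge h] at hz
        rw [abs_of_nonpos (by linarith [hz.2]), abs_of_nonpos (by linarith)]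
        linarith [hz.1]
    have hsub : uIcc p q ⊆ Icc (-R) R := uIcc_subset_Icc hp hq
    set F : ℝ → ℝ := fun z => f z - deriv f p * z with hFdef
    have hFderiv : ∀ z : ℝ, HasDerivAt F (deriv f z - deriv f p) z := by
      intro z
      have h1 : HasDerivAt f (deriv f z) z :=
        ((hf.differentiable (by norm_num)).differentiableAt).hasDerivAt
      have h2 : HasDerivAt (fun w : ℝ => deriv f p * w) (deriv f p) z := by
        simpa using (hasDerivAt_id z).const_mul (deriv f p)
      exact h1.sub h2
    have key := Convex.norm_image_sub_le_of_norm_deriv_le (f := F) (s := uIcc p q)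
      (fun z _ => (hFderiv z).differentiableAt)
      (fun z hz => by
        rw [(hFderiv z).deriv, Real.norm_eq_abs]
        calc |deriv f z - deriv f p| ≤ M2 * |z - p| := hLip p hp z (hsub hz)
          _ ≤ M2 * |q - p| := mul_le_mul_of_nonneg_left (habs z hz) hM2nn)
      (convex_uIcc p q) left_mem_uIcc right_mem_uIcc
    rw [Real.norm_eq_abs, Real.norm_eq_abs] at key
    have e : F q - F p = f q - f p - deriv f p * (q - p) := by rw [hFdef]; ring
    rw [e] at key
    linarith [key]
  -- the germ
  set gg : ℝ → ℝ → ℝ := fun s t => (f (y s) + f (y t)) / 2 * (x t - x s) + deriv f (y s) * A s t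
    with hggdef
  set K : ℝ := 2 * M2 * Lx * Ly ^ 2 + M2 * Ly * C with hKdef
  have hKnn : 0 ≤ K := by positivity
  have H1 : ∀ a b c : ℝ, 0 ≤ a → a ≤ b → b ≤ c → c ≤ 2 →
      |gg a c - gg a b - gg b c| ≤ K * (c - a) ^ (3 * α) := by
    intro a b c ha hab hbc hc2
    have ma : a ∈ Icc (0:ℝ) 2 := ⟨ha, by linarith⟩
    have mb : b ∈ Icc (0:ℝ) 2 := ⟨by linarith, by linarith⟩
    have mc : c ∈ Icc (0:ℝ) 2 := ⟨by linarith, by linarith⟩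
    rcases eq_or_lt_of_le (le_trans hab hbc) with hac | hac
    · -- a = c, so a = b = c
      have hba : b = a := le_antisymm (hac ▸ hbc) hab
      have hca : c = a := hac.symm
      have hg0 : gg a a = 0 := by
        rw [hggdef]
        simp only
        rw [hAself a ma]
        ring
      rw [hba, hca, hg0]
      norm_num [Real.zero_rpow ((by positivity : (0:ℝ) < 3*α).ne')]
    · -- a < c
      set P : ℝ := (c - a) ^ α with hPdef
      have hP0 : 0 < P := Real.rpow_pos_of_pos (by linarith) _
      have hyaJ := hyR a ma
      have hybJ := hyR b mb
      have hycJ := hyR c mc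
      -- increment bounds
      have hincr : ∀ u v : ℝ, u ∈ Icc (0:ℝ) 2 → v ∈ Icc (0:ℝ) 2 → u ≤ v → v - u ≤ c - a →
          |y v - y u| ≤ Ly * P ∧ |x v - x u| ≤ Lx * P := by
        intro u v hu hv huv hvu
        have h1 : |v - u| ^ α ≤ P := by
          rw [hPdef]
          apply Real.rpow_le_rpow (abs_nonneg _) _ hα0.le
          rw [abs_of_nonneg (by linarith)]
          exact hvu
        constructor
        · exact le_trans (hLy u hu v hv) (mul_le_mul_of_nonneg_left h1 hLy0.le)
        · exact le_trans (hLx u hu v hv) (mul_le_mul_of_nonneg_left h1 hLx0.le)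
      obtain ⟨hyab, hxab⟩ := hincr a b ma mb hab (by linarith)
      obtain ⟨hybc, hxbc⟩ := hincr b c mb mc hbc (by linarith)
      -- area bound
      have hAbc : |A b c| ≤ C * (P * P) := by
        have h1 := hC b mb c mc
        have h2 : |c - b| ^ (2*α) ≤ P * P := by
          have h3 : |c - b| ^ (2*α) ≤ (c - a) ^ (2*α) := by
            apply Real.rpow_le_rpow (abs_nonneg _) _ (by positivity)
            rw [abs_of_nonneg (by linarith)]
            linarith
          have h4 : (c - a) ^ (2*α) = P * P := by
            rw [hPdef, show 2*α = α + α by ring, Real.rpow_add (by linarith : (0:ℝ) < c - a)]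
          linarith [h3, h4.le]
        calc |A b c| ≤ C * |c - b| ^ (2*α) := h1
          _ ≤ C * (P * P) := mul_le_mul_of_nonneg_left h2 hC0.le
      -- Taylor-type bounds
      have hI1 : |f (y c) - f (y b) - deriv f (y a) * (y c - y b)| ≤ 2 * M2 * Ly^2 * (P * P) := by
        have t1 := hTay (y b) hybJ (y c) hycJ
        have t2 := hLip (y a) hyaJ (y b) hybJ
        have e : f (y c) - f (y b) - deriv f (y a) * (y c - y b)
            = (f (y c) - f (y b) - deriv f (y b) * (y c - y b))
              + (deriv f (y b) - deriv f (y a)) * (y c - y b) := by ring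
        rw [e]
        calc |(f (y c) - f (y b) - deriv f (y b) * (y c - y b))
              + (deriv f (y b) - deriv f (y a)) * (y c - y b)|
            ≤ |f (y c) - f (y b) - deriv f (y b) * (y c - y b)|
              + |deriv f (y b) - deriv f (y a)| * |y c - y b| := by
              refine le_trans (abs_add_le _ _) ?_
              rw [abs_mul]
          _ ≤ M2 * |y c - y b| * |y c - y b| + (M2 * |y b - y a|) * |y c - y b| := by
              have h5 := mul_le_mul_of_nonneg_right t2 (abs_nonneg (y c - y b))
              exact add_le_add t1 h5
          _ ≤ M2 * (Ly*P) * (Ly*P) + (M2 * (Ly*P)) * (Ly*P) := by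
              apply add_le_add
              · exact mul_le_mul (mul_le_mul_of_nonneg_left hybc hM2nn) hybc
                  (abs_nonneg _) (by positivity)
              · exact mul_le_mul (mul_le_mul_of_nonneg_left hyab hM2nn) hybc
                  (abs_nonneg _) (by positivity)
          _ = 2 * M2 * Ly^2 * (P * P) := by ring
      have hI2 : |f (y a) - f (y b) - deriv f (y a) * (y a - y b)| ≤ M2 * Ly^2 * (P * P) := by
        have t1 := hTay (y a) hyaJ (y b) hybJ
        have e : f (y a) - f (y b) - deriv f (y a) * (y a - y b)
            = -(f (y b) - f (y a) - deriv f (y a) * (y b - y a)) := by ring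
        rw [e, abs_neg]
        calc |f (y b) - f (y a) - deriv f (y a) * (y b - y a)|
            ≤ M2 * |y b - y a| * |y b - y a| := t1
          _ ≤ M2 * (Ly*P) * (Ly*P) :=
              mul_le_mul (mul_le_mul_of_nonneg_left hyab hM2nn) hyab
                (abs_nonneg _) (by positivity)
          _ = M2 * Ly^2 * (P * P) := by ring
      have hI3 : |deriv f (y a) - deriv f (y b)| ≤ M2 * (Ly * P) := by
        have t2 := hLip (y b) hybJ (y a) hyaJ
        calc |deriv f (y a) - deriv f (y b)| ≤ M2 * |y a - y b| := t2
          _ ≤ M2 * (Ly * P) := by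
            rw [abs_sub_comm]
            exact mul_le_mul_of_nonneg_left hyab hM2nn
      -- the algebraic identity
      have hAc : A a c = A a b + A b c
          + (1/2) * ((y c - y b) * (x a - x b) - (y a - y b) * (x c - x b)) :=
        hchen' a ma b mb c mc
      have key : gg a c - gg a b - gg b c =
          (x b - x a)/2 * (f (y c) - f (y b) - deriv f (y a) * (y c - y b))
          + (x c - x b)/2 * (f (y a) - f (y b) - deriv f (y a) * (y a - y b))
          + (deriv f (y a) - deriv f (y b)) * A b c := by
        rw [hggdef]
        simp only
        rw [hAc]
        ring
      rw [key]
      -- put the three bounds together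
      have hb1 : |(x b - x a)/2 * (f (y c) - f (y b) - deriv f (y a) * (y c - y b))|
          ≤ (Lx * P)/2 * (2 * M2 * Ly^2 * (P * P)) := by
        rw [abs_mul, abs_div, abs_two]
        apply mul_le_mul (by linarith [hxab] : |x b - x a|/2 ≤ (Lx*P)/2) hI1
          (abs_nonneg _) (by positivity)
      have hb2 : |(x c - x b)/2 * (f (y a) - f (y b) - deriv f (y a) * (y a - y b))|
          ≤ (Lx * P)/2 * (M2 * Ly^2 * (P * P)) := by
        rw [abs_mul, abs_div, abs_two]
        apply mul_le_mul (by linarith [hxbc] : |x c - x b|/2 ≤ (Lx*P)/2) hI2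
          (abs_nonneg _) (by positivity)
      have hb3 : |(deriv f (y a) - deriv f (y b)) * A b c| ≤ (M2 * (Ly*P)) * (C * (P*P)) := by
        rw [abs_mul]
        exact mul_le_mul hI3 hAbc (abs_nonneg _) (by positivity)
      have hP3 : K * (c - a) ^ (3*α) = K * (P * P * P) := by
        rw [hPdef, show 3*α = α + α + α by ring,
          Real.rpow_add (by linarith : (0:ℝ) < c - a),
          Real.rpow_add (by linarith : (0:ℝ) < c - a)]
      rw [hP3]
      calc |(x b - x a)/2 * (f (y c) - f (y b) - deriv f (y a) * (y c - y b))
            + (x c - x b)/2 * (f (y a) - f (y b) - deriv f (y a) * (y a - y b))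
            + (deriv f (y a) - deriv f (y b)) * A b c|
          ≤ |(x b - x a)/2 * (f (y c) - f (y b) - deriv f (y a) * (y c - y b))
            + (x c - x b)/2 * (f (y a) - f (y b) - deriv f (y a) * (y a - y b))|
            + |(deriv f (y a) - deriv f (y b)) * A b c| := abs_add_le _ _
        _ ≤ |(x b - x a)/2 * (f (y c) - f (y b) - deriv f (y a) * (y c - y b))|
            + |(x c - x b)/2 * (f (y a) - f (y b) - deriv f (y a) * (y a - y b))|
            + |(deriv f (y a) - deriv f (y b)) * A b c| := by
            have := abs_add_le ((x b - x a)/2 * (f (y c) - f (y b) - deriv f (y a) * (y c - y b)))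
              ((x c - x b)/2 * (f (y a) - f (y b) - deriv f (y a) * (y a - y b)))
            linarith
        _ ≤ (Lx * P)/2 * (2 * M2 * Ly^2 * (P * P)) + (Lx * P)/2 * (M2 * Ly^2 * (P * P))
            + (M2 * (Ly*P)) * (C * (P*P)) := by linarith [hb1, hb2, hb3]
        _ ≤ K * (P * P * P) := by
            rw [hKdef]
            have hnn : (0:ℝ) ≤ M2 * Lx * Ly^2 * (P*P*P) := by positivity
            have e1 : (Lx * P)/2 * (2 * M2 * Ly^2 * (P * P)) + (Lx * P)/2 * (M2 * Ly^2 * (P * P))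
                + (M2 * (Ly*P)) * (C * (P*P))
                = (3/2) * (M2 * Lx * Ly^2 * (P*P*P)) + M2 * Ly * C * (P*P*P) := by ring
            have e2 : (2 * M2 * Lx * Ly ^ 2 + M2 * Ly * C) * (P * P * P)
                = 2 * (M2 * Lx * Ly^2 * (P*P*P)) + M2 * Ly * C * (P*P*P) := by ring
            rw [e1, e2]
            linarith
  -- continuity of the Lévy area
  have hAcont : ContinuousOn (fun p : ℝ × ℝ => A p.1 p.2) (Icc (0:ℝ) 2 ×ˢ Icc (0:ℝ) 2) := by
    set D : ℝ := Lx * Ly * 2 ^ α with hDdef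
    rintro ⟨s₀, t₀⟩ hp₀
    have hs₀ : s₀ ∈ Icc (0:ℝ) 2 := hp₀.1
    have ht₀ : t₀ ∈ Icc (0:ℝ) 2 := hp₀.2
    have hbound : ∀ p ∈ Icc (0:ℝ) 2 ×ˢ Icc (0:ℝ) 2, |A p.1 p.2 - A s₀ t₀| ≤
        C * |p.1 - s₀| ^ (2*α) + C * |p.2 - t₀| ^ (2*α)
          + D * |p.1 - s₀| ^ α + D * |p.2 - t₀| ^ α := by
      rintro ⟨s, t⟩ hp
      have hs : s ∈ Icc (0:ℝ) 2 := hp.1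
      have ht : t ∈ Icc (0:ℝ) 2 := hp.2
      have h1 := hchen' s hs s₀ hs₀ t ht
      have h2 := hchen' s₀ hs₀ t₀ ht₀ t ht
      have hA1 : |A s s₀| ≤ C * |s - s₀| ^ (2*α) := by
        have := hC s hs s₀ hs₀
        rwa [abs_sub_comm s₀ s] at this
      have hA2 : |A t₀ t| ≤ C * |t - t₀| ^ (2*α) := hC t₀ ht₀ t ht
      have hQ1 : |(1:ℝ)/2 * ((y t - y s₀) * (x s - x s₀) - (y s - y s₀) * (x t - x s₀))|
          ≤ D * |s - s₀| ^ α := by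
        have e1 : |(y t - y s₀) * (x s - x s₀)| ≤ (Ly * 2^α) * (Lx * |s - s₀| ^ α) := by
          rw [abs_mul]
          exact mul_le_mul (hyB s₀ hs₀ t ht) (hLx s₀ hs₀ s hs) (abs_nonneg _) (by positivity)
        have e2 : |(y s - y s₀) * (x t - x s₀)| ≤ (Ly * |s - s₀| ^ α) * (Lx * 2^α) := by
          rw [abs_mul]
          exact mul_le_mul (hLy s₀ hs₀ s hs) (hxB s₀ hs₀ t ht) (abs_nonneg _) (by positivity)
        calc |(1:ℝ)/2 * ((y t - y s₀) * (x s - x s₀) - (y s - y s₀) * (x t - x s₀))|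
            ≤ (|(y t - y s₀) * (x s - x s₀)| + |(y s - y s₀) * (x t - x s₀)|) / 2 := by
              rw [abs_mul, show |(1:ℝ)/2| = 1/2 by norm_num]
              have := abs_sub ((y t - y s₀) * (x s - x s₀)) ((y s - y s₀) * (x t - x s₀))
              linarith
          _ ≤ ((Ly * 2^α) * (Lx * |s - s₀| ^ α) + (Ly * |s - s₀| ^ α) * (Lx * 2^α)) / 2 := by
              linarith
          _ = D * |s - s₀| ^ α := by rw [hDdef]; ring
      have hQ2 : |(1:ℝ)/2 * ((y t - y t₀) * (x s₀ - x t₀) - (y s₀ - y t₀) * (x t - x t₀))|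
          ≤ D * |t - t₀| ^ α := by
        have e1 : |(y t - y t₀) * (x s₀ - x t₀)| ≤ (Ly * |t - t₀| ^ α) * (Lx * 2^α) := by
          rw [abs_mul]
          exact mul_le_mul (hLy t₀ ht₀ t ht) (hxB t₀ ht₀ s₀ hs₀) (abs_nonneg _) (by positivity)
        have e2 : |(y s₀ - y t₀) * (x t - x t₀)| ≤ (Ly * 2^α) * (Lx * |t - t₀| ^ α) := by
          rw [abs_mul]
          exact mul_le_mul (hyB t₀ ht₀ s₀ hs₀) (hLx t₀ ht₀ t ht) (abs_nonneg _) (by positivity)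
        calc |(1:ℝ)/2 * ((y t - y t₀) * (x s₀ - x t₀) - (y s₀ - y t₀) * (x t - x t₀))|
            ≤ (|(y t - y t₀) * (x s₀ - x t₀)| + |(y s₀ - y t₀) * (x t - x t₀)|) / 2 := by
              rw [abs_mul, show |(1:ℝ)/2| = 1/2 by norm_num]
              have := abs_sub ((y t - y t₀) * (x s₀ - x t₀)) ((y s₀ - y t₀) * (x t - x t₀))
              linarith
          _ ≤ ((Ly * |t - t₀| ^ α) * (Lx * 2^α) + (Ly * 2^α) * (Lx * |t - t₀| ^ α)) / 2 := by
              linarith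
          _ = D * |t - t₀| ^ α := by rw [hDdef]; ring
      have e : A s t - A s₀ t₀ = A s s₀ + A t₀ t
          + (1/2) * ((y t - y s₀) * (x s - x s₀) - (y s - y s₀) * (x t - x s₀))
          + (1/2) * ((y t - y t₀) * (x s₀ - x t₀) - (y s₀ - y t₀) * (x t - x t₀)) := by
        rw [h1, h2]; ring
      calc |A s t - A s₀ t₀| = |A s s₀ + A t₀ t
          + (1/2) * ((y t - y s₀) * (x s - x s₀) - (y s - y s₀) * (x t - x s₀))
          + (1/2) * ((y t - y t₀) * (x s₀ - x t₀) - (y s₀ - y t₀) * (x t - x t₀))| := by rw [e]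
        _ ≤ C * |s - s₀| ^ (2*α) + C * |t - t₀| ^ (2*α)
            + D * |s - s₀| ^ α + D * |t - t₀| ^ α := by
          have t1 := abs_add_le (A s s₀ + A t₀ t
            + (1/2) * ((y t - y s₀) * (x s - x s₀) - (y s - y s₀) * (x t - x s₀)))
            ((1/2) * ((y t - y t₀) * (x s₀ - x t₀) - (y s₀ - y t₀) * (x t - x t₀)))
          have t2 := abs_add_le (A s s₀ + A t₀ t)
            ((1/2) * ((y t - y s₀) * (x s - x s₀) - (y s - y s₀) * (x t - x s₀)))
          have t3 := abs_add_le (A s s₀) (A t₀ t)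
          have := hQ1
          have := hQ2
          linarith
    rw [ContinuousWithinAt, tendsto_iff_dist_tendsto_zero]
    have hfst : Tendsto (fun p : ℝ × ℝ => p.1 - s₀)
        (𝓝[Icc (0:ℝ) 2 ×ˢ Icc (0:ℝ) 2] (s₀, t₀)) (𝓝 0) := by
      have h2 : Tendsto (fun p : ℝ × ℝ => p.1 - s₀) (𝓝 ((s₀:ℝ), t₀)) (𝓝 (s₀ - s₀)) :=
        (continuous_fst.sub continuous_const).tendsto _
      rw [sub_self] at h2
      exact h2.mono_left nhdsWithin_le_nhds
    have hsnd : Tendsto (fun p : ℝ × ℝ => p.2 - t₀)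
        (𝓝[Icc (0:ℝ) 2 ×ˢ Icc (0:ℝ) 2] (s₀, t₀)) (𝓝 0) := by
      have h2 : Tendsto (fun p : ℝ × ℝ => p.2 - t₀) (𝓝 ((s₀:ℝ), t₀)) (𝓝 (t₀ - t₀)) :=
        (continuous_snd.sub continuous_const).tendsto _
      rw [sub_self] at h2
      exact h2.mono_left nhdsWithin_le_nhds
    have Tb : Tendsto (fun p : ℝ × ℝ => C * |p.1 - s₀| ^ (2*α) + C * |p.2 - t₀| ^ (2*α)
        + D * |p.1 - s₀| ^ α + D * |p.2 - t₀| ^ α)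
        (𝓝[Icc (0:ℝ) 2 ×ˢ Icc (0:ℝ) 2] (s₀, t₀)) (𝓝 0) := by
      have T1 := ((tendsto_abs_rpow_zero (by positivity : (0:ℝ) < 2*α)).comp hfst).const_mul C
      have T2 := ((tendsto_abs_rpow_zero (by positivity : (0:ℝ) < 2*α)).comp hsnd).const_mul C
      have T3 := ((tendsto_abs_rpow_zero hα0).comp hfst).const_mul D
      have T4 := ((tendsto_abs_rpow_zero hα0).comp hsnd).const_mul D
      have T5 := ((T1.add T2).add T3).add T4
      simpa [Function.comp] using T5
    apply squeeze_zero' (Eventually.of_forall fun p => dist_nonneg) _ Tb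
    filter_upwards [self_mem_nhdsWithin] with p hp
    rw [Real.dist_eq]
    exact hbound p hp
  -- continuity of the germ
  have hgc : ContinuousOn (fun p : ℝ × ℝ => gg p.1 p.2) (Icc (0:ℝ) 2 ×ˢ Icc (0:ℝ) 2) := by
    have h1 : ContinuousOn (fun p : ℝ × ℝ => y p.1) (Icc (0:ℝ) 2 ×ˢ Icc (0:ℝ) 2) :=
      hyc.comp continuousOn_fst fun p hp => hp.1
    have h2 : ContinuousOn (fun p : ℝ × ℝ => y p.2) (Icc (0:ℝ) 2 ×ˢ Icc (0:ℝ) 2) :=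
      hyc.comp continuousOn_snd fun p hp => hp.2
    have h3 : ContinuousOn (fun p : ℝ × ℝ => x p.1) (Icc (0:ℝ) 2 ×ˢ Icc (0:ℝ) 2) :=
      hxc.comp continuousOn_fst fun p hp => hp.1
    have h4 : ContinuousOn (fun p : ℝ × ℝ => x p.2) (Icc (0:ℝ) 2 ×ˢ Icc (0:ℝ) 2) :=
      hxc.comp continuousOn_snd fun p hp => hp.2
    rw [hggdef]
    apply ContinuousOn.add
    · exact (((hfc.comp_continuousOn h1).add (hfc.comp_continuousOn h2)).div_const 2).mul
        (h4.sub h3)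
    · exact (hf'c.comp_continuousOn h1).mul hAcont
  -- apply the sewing lemma
  obtain ⟨Φ, hΦc, K2, hK2nn, hΦinc⟩ := sewing hKnn hβ H1 hgc
  refine ⟨Φ 1 - Φ 0, ?_⟩
  set G : ℝ → ℝ := fun v => ∫ u in (0:ℝ)..v, Φ u with hGdef
  have hΦint : ∀ a b : ℝ, IntervalIntegrable Φ volume a b :=
    fun a b => hΦc.intervalIntegrable a b
  have hG1 : HasDerivAt G (Φ 1) 1 :=
    intervalIntegral.integral_hasDerivAt_right (hΦint 0 1)
      (hΦc.stronglyMeasurableAtFilter volume _) hΦc.continuousAt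
  have hG0 : HasDerivAt G (Φ 0) 0 :=
    intervalIntegral.integral_hasDerivAt_right (hΦint 0 0)
      (hΦc.stronglyMeasurableAtFilter volume _) hΦc.continuousAt
  have S1 : Tendsto (fun ε : ℝ => (G (1+ε) - G 1) / ε) (𝓝[>] (0:ℝ)) (𝓝 (Φ 1)) := by
    have hs := hasDerivAt_iff_tendsto_slope.mp hG1
    have hmap : Tendsto (fun ε : ℝ => 1 + ε) (𝓝[>] (0:ℝ)) (𝓝[({1}ᶜ : Set ℝ)] (1:ℝ)) := by
      rw [tendsto_nhdsWithin_iff]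
      constructor
      · have h2 : Tendsto (fun ε : ℝ => 1 + ε) (𝓝 0) (𝓝 (1 + 0)) :=
          (continuous_const.add continuous_id).tendsto 0
        rw [add_zero] at h2
        exact h2.mono_left nhdsWithin_le_nhds
      · filter_upwards [self_mem_nhdsWithin] with ε hε
        have : (0:ℝ) < ε := hε
        simp only [Set.mem_compl_iff, Set.mem_singleton_iff]
        intro h
        nlinarith [h]
    have hcomp := hs.comp hmap
    apply hcomp.congr
    intro ε
    simp only [Function.comp_apply]
    rw [slope_def_field]
    congr 1
    ring
  have S0 : Tendsto (fun ε : ℝ => (G ε - G 0) / (ε - 0)) (𝓝[>] (0:ℝ)) (𝓝 (Φ 0)) := by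
    have hs := hasDerivAt_iff_tendsto_slope.mp hG0
    have hsub : Set.Ioi (0:ℝ) ⊆ ({0}ᶜ : Set ℝ) := by
      intro z hz
      simp only [Set.mem_compl_iff, Set.mem_singleton_iff]
      exact ne_of_gt hz
    have hcomp := hs.mono_left (nhdsWithin_mono 0 hsub)
    apply hcomp.congr
    intro ε
    rw [slope_def_field]
  set Rint : ℝ → ℝ := fun ε => ∫ u in (0:ℝ)..(1:ℝ), (Φ (u+ε) - Φ u - gg u (u+ε))
    with hRintdef
  have hIoo : Set.Ioo (0:ℝ) 1 ∈ 𝓝[>] (0:ℝ) :=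
    Ioo_mem_nhdsGT_of_mem ⟨le_rfl, zero_lt_one⟩
  -- auxiliary integrability and continuity for each small ε
  have haux : ∀ ε : ℝ, 0 < ε → ε < 1 →
      ContinuousOn (fun u : ℝ => gg u (u+ε)) (Icc (0:ℝ) 1) ∧
      IntervalIntegrable (fun u => ((f (y u) + f (y (u + ε))) / 2) * (x (u + ε) - x u)) volume 0 1 ∧
      IntervalIntegrable (fun u => deriv f (y u) * A u (u + ε)) volume 0 1 := by
    intro ε hε0 hε1
    have hmap1 : ∀ u ∈ Icc (0:ℝ) 1, u ∈ Icc (0:ℝ) 2 :=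
      fun u hu => ⟨hu.1, by linarith [hu.2]⟩
    have hmap2 : ∀ u ∈ Icc (0:ℝ) 1, u + ε ∈ Icc (0:ℝ) 2 :=
      fun u hu => ⟨by linarith [hu.1], by linarith [hu.2]⟩
    have hpair : ContinuousOn (fun u : ℝ => ((u:ℝ), u+ε)) (Icc (0:ℝ) 1) :=
      (continuous_id.prodMk (continuous_id.add continuous_const)).continuousOn
    have hggu : ContinuousOn (fun u : ℝ => gg u (u+ε)) (Icc (0:ℝ) 1) := by
      have := ContinuousOn.comp hgc hpair (fun u hu => ⟨hmap1 u hu, hmap2 u hu⟩)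
      exact this
    have hyu : ContinuousOn (fun u : ℝ => y u) (Icc (0:ℝ) 1) := hyc.mono hmap1
    have hyue : ContinuousOn (fun u : ℝ => y (u+ε)) (Icc (0:ℝ) 1) := by
      have := ContinuousOn.comp hyc ((continuous_id.add continuous_const).continuousOn
        (s := Icc (0:ℝ) 1)) hmap2
      exact this
    have hxu : ContinuousOn (fun u : ℝ => x u) (Icc (0:ℝ) 1) := hxc.mono hmap1
    have hxue : ContinuousOn (fun u : ℝ => x (u+ε)) (Icc (0:ℝ) 1) := by
      have := ContinuousOn.comp hxc ((continuous_id.add continuous_const).continuousOn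
        (s := Icc (0:ℝ) 1)) hmap2
      exact this
    have hAu : ContinuousOn (fun u : ℝ => A u (u+ε)) (Icc (0:ℝ) 1) := by
      have := ContinuousOn.comp hAcont hpair (fun u hu => ⟨hmap1 u hu, hmap2 u hu⟩)
      exact this
    refine ⟨hggu, ?_, ?_⟩
    · apply ContinuousOn.intervalIntegrable
      rw [uIcc_of_le zero_le_one]
      exact (((hfc.comp_continuousOn hyu).add (hfc.comp_continuousOn hyue)).div_const 2).mul
        (hxue.sub hxu)
    · apply ContinuousOn.intervalIntegrable
      rw [uIcc_of_le zero_le_one]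
      exact (hf'c.comp_continuousOn hyu).mul hAu
  -- the eventual identity
  have hEq : ∀ᶠ ε in 𝓝[>] (0:ℝ), Ieps x y A f 0 1 ε
      = (G (1+ε) - G 1)/ε - (G ε - G 0)/(ε - 0) - ε⁻¹ * Rint ε := by
    filter_upwards [hIoo] with ε hε
    obtain ⟨hε0, hε1⟩ := hε
    obtain ⟨hggu, hint1, hint2⟩ := haux ε hε0 hε1
    have hintgg : IntervalIntegrable (fun u => gg u (u+ε)) volume 0 1 := by
      apply ContinuousOn.intervalIntegrable
      rw [uIcc_of_le zero_le_one]
      exact hggu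
    have hintΦs : IntervalIntegrable (fun u => Φ (u+ε)) volume 0 1 :=
      (hΦc.comp (continuous_id.add continuous_const)).intervalIntegrable 0 1
    have hintΦ : IntervalIntegrable Φ volume 0 1 := hΦint 0 1
    have hdiff : IntervalIntegrable (fun u => Φ (u+ε) - Φ u) volume 0 1 :=
      hintΦs.sub hintΦ
    have hsum : (∫ u in (0:ℝ)..(1:ℝ), ((f (y u) + f (y (u + ε))) / 2) * (x (u + ε) - x u))
        + (∫ u in (0:ℝ)..(1:ℝ), deriv f (y u) * A u (u + ε))
        = ∫ u in (0:ℝ)..(1:ℝ), gg u (u+ε) := by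
      rw [← intervalIntegral.integral_add hint1 hint2]
    have e3 : (∫ u in (0:ℝ)..(1:ℝ), gg u (u+ε))
        = (∫ u in (0:ℝ)..(1:ℝ), (Φ (u+ε) - Φ u)) - Rint ε := by
      rw [hRintdef, ← intervalIntegral.integral_sub hdiff (hdiff.sub hintgg)]
      apply intervalIntegral.integral_congr
      intro u _
      ring
    have e4 : (∫ u in (0:ℝ)..(1:ℝ), (Φ (u+ε) - Φ u))
        = (∫ u in ε..(1+ε), Φ u) - G 1 := by
      rw [intervalIntegral.integral_sub hintΦs hintΦ]
      congr 1
      have := intervalIntegral.integral_comp_add_right (a := (0:ℝ)) (b := (1:ℝ)) Φ ε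
      rw [this, zero_add]
    have e5 : G (1+ε) = G ε + ∫ u in ε..(1+ε), Φ u :=
      (intervalIntegral.integral_add_adjacent_intervals (hΦint 0 ε) (hΦint ε (1+ε))).symm
    have e6 : G 0 = 0 := intervalIntegral.integral_same
    have hfinal : (∫ u in (0:ℝ)..(1:ℝ), ((f (y u) + f (y (u + ε))) / 2) * (x (u + ε) - x u))
        + (∫ u in (0:ℝ)..(1:ℝ), deriv f (y u) * A u (u + ε))
        = (G (1+ε) - G 1) - (G ε - G 0) - Rint ε := by
      rw [hsum, e3, e4, e5, e6]
      ring
    have hεne : ε ≠ 0 := ne_of_gt hε0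
    rw [Ieps]
    rw [sub_zero]
    linear_combination ε⁻¹ * hfinal
  -- remainder term tends to zero
  have S2 : Tendsto (fun ε : ℝ => ε⁻¹ * Rint ε) (𝓝[>] (0:ℝ)) (𝓝 0) := by
    apply squeeze_zero_norm' (a := fun ε : ℝ => K2 * ε ^ (3*α - 1))
    · filter_upwards [hIoo] with ε hε
      obtain ⟨hε0, hε1⟩ := hε
      have hRb : |Rint ε| ≤ K2 * ε ^ (3*α) * |1 - (0:ℝ)| := by
        simp only [hRintdef]
        rw [← Real.norm_eq_abs]
        apply intervalIntegral.norm_integral_le_of_norm_le_const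
        intro u hu
        rw [Set.uIoc_of_le zero_le_one] at hu
        have hu0 : 0 < u := hu.1
        have hu1 : u ≤ 1 := hu.2
        have := hΦinc u (u+ε) (le_of_lt hu0) (by linarith) (by linarith)
        rw [show u + ε - u = ε by ring] at this
        rw [Real.norm_eq_abs]
        exact this
      show ‖ε⁻¹ * Rint ε‖ ≤ K2 * ε ^ (3*α - 1)
      rw [Real.norm_eq_abs, abs_mul, abs_inv, abs_of_pos hε0]
      norm_num at hRb
      calc ε⁻¹ * |Rint ε| ≤ ε⁻¹ * (K2 * ε ^ (3*α)) :=
          mul_le_mul_of_nonneg_left hRb (by positivity)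
        _ = K2 * ε ^ (3*α - 1) := by
            rw [Real.rpow_sub hε0, Real.rpow_one]
            field_simp
    · have h := (Real.continuousAt_rpow_const 0 (3*α - 1) (Or.inr (by linarith))).tendsto
      rw [Real.zero_rpow (by linarith : 3*α - 1 ≠ 0)] at h
      have h2 := (h.mono_left (nhdsWithin_le_nhds (s := Set.Ioi (0:ℝ)))).const_mul K2
      rwa [mul_zero] at h2
  have Sfin := (S1.sub S0).sub S2
  rw [sub_zero] at Sfin
  have hEq' : (fun ε : ℝ => (G (1+ε) - G 1)/ε - (G ε - G 0)/(ε - 0) - ε⁻¹ * Rint ε)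
      =ᶠ[𝓝[>] (0:ℝ)] (fun ε => Ieps x y A f 0 1 ε) := by
    filter_upwards [hEq] with ε h
    exact h.symm
  exact Sfin.congr' hEq'
end

section
/- Let α ∈ (1/3, 1), let x, y : [0,2] → ℝ be α-Hölder, let A be an α-Lévy area of order 0 associated with γ = (x, y), and let f : ℝ → ℝ be of class C². For ε ∈ (0,1] and n ∈ ℕ set I_n(ε) = 2^n ε^{−1} ∫_0^{ε⌊1/ε⌋} ((f(y(u)) + f(y(u + ε2^{−n})))/2)(x(u + ε2^{−n}) − x(u)) du + 2^n ε^{−1} ∫_0^{ε⌊1/ε⌋} f′(y(u)) A_{u, u+ε2^{−n}} du. Then there exists C > 0 such that |I_{n+1}(ε) − I_n(ε)| ≤ C (ε 2^{−n})^{min(3α−1, α)} for all n ∈ ℕ and all ε ∈ (0,1]. -/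
open MeasureTheory Filter Set

/-- The dyadic refinement `I_n(ε)` of the approximation of the corrected symmetric
integral on `[0, 1]`. -/
noncomputable def Idyad (x y : ℝ → ℝ) (A : ℝ → ℝ → ℝ) (f : ℝ → ℝ) (n : ℕ) (ε : ℝ) : ℝ :=
  2 ^ n * ε⁻¹ * (∫ u in (0:ℝ)..(ε * (⌊1/ε⌋ : ℝ)),
      ((f (y u) + f (y (u + ε / 2 ^ n))) / 2) * (x (u + ε / 2 ^ n) - x u))
    + 2 ^ n * ε⁻¹ * (∫ u in (0:ℝ)..(ε * (⌊1/ε⌋ : ℝ)), deriv f (y u) * A u (u + ε / 2 ^ n))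


-- continuity from a Hölder-type modulus
lemma cont_of_modulus {z : ℝ → ℝ} {s : Set ℝ} {φ : ℝ → ℝ → ℝ}
    (hb : ∀ a ∈ s, ∀ t ∈ s, |z t - z a| ≤ φ a t)
    (hφ : ∀ a ∈ s, ContinuousWithinAt (φ a) s a) (hφ0 : ∀ a ∈ s, φ a a = 0) :
    ContinuousOn z s := by
  intro a ha
  rw [Metric.continuousWithinAt_iff]
  intro ε hε
  have h := (Metric.continuousWithinAt_iff.1 (hφ a ha)) ε hε
  obtain ⟨δ, hδ, hδ'⟩ := h
  refine ⟨δ, hδ, fun {t} ht hdt => ?_⟩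
  have h1 := hδ' ht hdt
  rw [Real.dist_eq, hφ0 a ha] at h1
  have h2 := hb a ha t ht
  rw [Real.dist_eq]
  calc |z t - z a| ≤ φ a t := h2
    _ ≤ |φ a t - 0| := by rw [sub_zero]; exact le_abs_self _
    _ < ε := h1

lemma rpow_cont {α : ℝ} (hα : 0 < α) (a : ℝ) :
    Continuous (fun t : ℝ => |t - a| ^ α) := by
  exact (Real.continuous_rpow_const hα.le).comp (continuous_abs.comp (continuous_id.sub continuous_const))

lemma holder_continuousOn {α a b : ℝ} (hα : 0 < α) {z : ℝ → ℝ}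
    (hz : HolderOnIcc α a b z) : ContinuousOn z (Set.Icc a b) := by
  obtain ⟨L, hL, hz⟩ := hz
  refine cont_of_modulus (φ := fun s t => L * |t - s| ^ α) hz ?_ ?_
  · intro s hs
    exact (((rpow_cont hα s).continuousAt).const_smul L).continuousWithinAt
  · intro s hs
    simp [Real.zero_rpow hα.ne']

-- Lipschitz bound for deriv f on a convex set from bound on second derivative
lemma derivf_lip {f : ℝ → ℝ} (hf : ContDiff ℝ 2 f) {K M : ℝ}
    (hM : ∀ z ∈ Set.Icc (-K) K, |deriv (deriv f) z| ≤ M)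
    {a b : ℝ} (ha : a ∈ Set.Icc (-K) K) (hb : b ∈ Set.Icc (-K) K) :
    |deriv f b - deriv f a| ≤ M * |b - a| := by
  have h1 : ContDiff ℝ 1 (deriv f) := by
    have h2 : (2 : WithTop ℕ∞) = 1 + 1 := by norm_num
    rw [h2] at hf
    exact (contDiff_succ_iff_deriv.mp hf).2.2
  have hd : Differentiable ℝ (deriv f) := h1.differentiable (by norm_num)
  have := (convex_Icc (-K) K).norm_image_sub_le_of_norm_deriv_le
    (f := deriv f) (fun z _ => hd z) (fun z hz => by simpa using hM z hz) ha hb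
  simpa [Real.norm_eq_abs] using this

lemma taylor_bd {f : ℝ → ℝ} (hf : ContDiff ℝ 2 f) {K M : ℝ}
    (hM : ∀ z ∈ Set.Icc (-K) K, |deriv (deriv f) z| ≤ M)
    {a b : ℝ} (ha : a ∈ Set.Icc (-K) K) (hb : b ∈ Set.Icc (-K) K) :
    |f b - f a - deriv f a * (b - a)| ≤ M * (b - a) ^ 2 := by
  have hdf : Differentiable ℝ f := hf.differentiable (by norm_num)
  set g : ℝ → ℝ := fun t => f t - deriv f a * t with hg
  have hgd : ∀ t, DifferentiableAt ℝ g t := fun t =>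
    (hdf t).sub ((differentiable_const _).mul differentiable_id t)
  have hgderiv : ∀ t, deriv g t = deriv f t - deriv f a := by
    intro t
    have h1 : HasDerivAt g (deriv f t - deriv f a) t := by
      have h2 := ((hdf t).hasDerivAt).sub ((hasDerivAt_id t).const_mul (deriv f a))
      exact h2.congr_deriv (by ring)
    exact h1.deriv
  have hsub : Set.uIcc a b ⊆ Set.Icc (-K) K :=
    Set.uIcc_subset_Icc ha hb
  have key := (convex_uIcc a b).norm_image_sub_le_of_norm_deriv_le
    (f := g) (C := M * |b - a|) (fun z _ => hgd z) ?_ (Set.left_mem_uIcc) (Set.right_mem_uIcc)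
  · have : g b - g a = f b - f a - deriv f a * (b - a) := by rw [hg]; ring
    rw [this] at key
    calc |f b - f a - deriv f a * (b - a)| ≤ M * |b - a| * |b - a| := by
          simpa [Real.norm_eq_abs] using key
      _ = M * (b - a) ^ 2 := by rw [mul_assoc, ← abs_mul, abs_mul_self, sq]
  · intro z hz
    rw [Real.norm_eq_abs, hgderiv z]
    have h1 := derivf_lip hf hM ha (hsub hz)
    have h2 : |z - a| ≤ |b - a| := abs_sub_left_of_mem_uIcc hz
    have hM0 : 0 ≤ M := le_trans (abs_nonneg _) (hM a ha)
    calc |deriv f z - deriv f a| ≤ M * |z - a| := derivf_lip hf hM ha (hsub hz)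
      _ ≤ M * |b - a| := by nlinarith

section Levy

variable {x y : ℝ → ℝ} {A : ℝ → ℝ → ℝ}
  (hC : ∀ r ∈ Set.Icc (0:ℝ) 2, ∀ s ∈ Set.Icc (0:ℝ) 2, ∀ t ∈ Set.Icc (0:ℝ) 2,
    A r s + A s t + A t r
      = -(1/2) * ((y t - y s) * (x r - x s) - (y r - y s) * (x t - x s)))

include hC

lemma levy_self {t : ℝ} (ht : t ∈ Set.Icc (0:ℝ) 2) : A t t = 0 := by
  have h := hC t ht t ht t ht
  ring_nf at h ⊢
  linarith

lemma levy_antisym {s t : ℝ} (hs : s ∈ Set.Icc (0:ℝ) 2) (ht : t ∈ Set.Icc (0:ℝ) 2) :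
    A t s = -A s t := by
  have h := hC t ht s hs t ht
  have h2 := levy_self hC ht
  ring_nf at h
  rw [h2] at h
  linarith

/-- Chen relation in additive form. -/
lemma levy_chen {u m v : ℝ} (hu : u ∈ Set.Icc (0:ℝ) 2) (hm : m ∈ Set.Icc (0:ℝ) 2)
    (hv : v ∈ Set.Icc (0:ℝ) 2) :
    A u m + A m v - A u v
      = -(1/2) * ((y v - y m) * (x u - x m) - (y u - y m) * (x v - x m)) := by
  have h := hC u hu m hm v hv
  have h2 := levy_antisym hC hu hv
  rw [h2] at h
  linarith

/-- Decomposition of `A` via the one-parameter function `A 0`. -/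
lemma levy_decomp {s t : ℝ} (hs : s ∈ Set.Icc (0:ℝ) 2) (ht : t ∈ Set.Icc (0:ℝ) 2) :
    A s t = A 0 t - A 0 s
      + -(1/2) * ((y t - y s) * (x 0 - x s) - (y 0 - y s) * (x t - x s)) := by
  have h0 : (0:ℝ) ∈ Set.Icc (0:ℝ) 2 := by constructor <;> norm_num
  have h := hC 0 h0 s hs t ht
  have h2 := levy_antisym hC h0 ht
  rw [h2] at h
  linarith

end Levy

section LevyCont

variable {α : ℝ} {x y : ℝ → ℝ} {A : ℝ → ℝ → ℝ}

lemma levy_g_cont (hα : 0 < α)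
    (hC : ∀ r ∈ Set.Icc (0:ℝ) 2, ∀ s ∈ Set.Icc (0:ℝ) 2, ∀ t ∈ Set.Icc (0:ℝ) 2,
      A r s + A s t + A t r
        = -(1/2) * ((y t - y s) * (x r - x s) - (y r - y s) * (x t - x s)))
    {CA : ℝ}
    (hAb : ∀ s ∈ Set.Icc (0:ℝ) 2, ∀ t ∈ Set.Icc (0:ℝ) 2, |A s t| ≤ CA * |t - s| ^ (2*α))
    (hxc : ContinuousOn x (Set.Icc 0 2)) (hyc : ContinuousOn y (Set.Icc 0 2)) :
    ContinuousOn (fun t => A 0 t) (Set.Icc (0:ℝ) 2) := by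
  set φ : ℝ → ℝ → ℝ := fun s t => CA * |t - s| ^ (2*α)
    + |(-(1/2) * ((y t - y s) * (x 0 - x s) - (y 0 - y s) * (x t - x s)))| with hφdef
  refine cont_of_modulus (φ := φ) ?_ ?_ ?_
  · intro s hs t ht
    have hd := levy_decomp hC hs ht
    have : A 0 t - A 0 s = A s t - -(1/2) * ((y t - y s) * (x 0 - x s) - (y 0 - y s) * (x t - x s)) := by
      linarith
    rw [this]
    refine (abs_sub _ _).trans ?_
    exact add_le_add (hAb s hs t ht) le_rfl
  · intro s hs
    have h2α : 0 < 2*α := by linarith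
    refine ContinuousWithinAt.add ?_ ?_
    · exact (((rpow_cont h2α s).continuousAt).const_smul CA).continuousWithinAt
    · refine ContinuousWithinAt.abs ?_
      have hyw : ContinuousWithinAt y (Set.Icc 0 2) s := hyc s hs
      have hxw : ContinuousWithinAt x (Set.Icc 0 2) s := hxc s hs
      have h1 : ContinuousWithinAt
          (fun t => (y t - y s) * (x 0 - x s) - (y 0 - y s) * (x t - x s)) (Set.Icc 0 2) s :=
        ((hyw.sub continuousWithinAt_const).mul continuousWithinAt_const).sub
          (continuousWithinAt_const.mul (hxw.sub continuousWithinAt_const))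
      exact continuousWithinAt_const.mul h1
  · intro s hs
    simp [hφdef, Real.zero_rpow (by positivity : 2*α ≠ 0)]

end LevyCont

section SliceCont

variable {α : ℝ} {x y : ℝ → ℝ} {A : ℝ → ℝ → ℝ} {f : ℝ → ℝ} {c : ℝ}

lemma shift_maps (hc0 : 0 ≤ c) :
    Set.MapsTo (fun u : ℝ => u + c) (Set.Icc 0 (2 - c)) (Set.Icc (0:ℝ) 2) := by
  intro u hu
  obtain ⟨h1, h2⟩ := hu
  simp only [Set.mem_Icc]
  constructor <;> linarith

lemma incl_maps (hc0 : 0 ≤ c) :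
    Set.MapsTo (fun u : ℝ => u) (Set.Icc 0 (2 - c)) (Set.Icc (0:ℝ) 2) := by
  intro u hu
  obtain ⟨h1, h2⟩ := hu
  simp only [Set.mem_Icc]
  constructor <;> linarith

lemma levy_slice_cont (hα : 0 < α)
    (hC : ∀ r ∈ Set.Icc (0:ℝ) 2, ∀ s ∈ Set.Icc (0:ℝ) 2, ∀ t ∈ Set.Icc (0:ℝ) 2,
      A r s + A s t + A t r
        = -(1/2) * ((y t - y s) * (x r - x s) - (y r - y s) * (x t - x s)))
    {CA : ℝ}
    (hAb : ∀ s ∈ Set.Icc (0:ℝ) 2, ∀ t ∈ Set.Icc (0:ℝ) 2, |A s t| ≤ CA * |t - s| ^ (2*α))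
    (hxc : ContinuousOn x (Set.Icc 0 2)) (hyc : ContinuousOn y (Set.Icc 0 2))
    (hc0 : 0 ≤ c) (hc2 : c ≤ 2) :
    ContinuousOn (fun u => A u (u + c)) (Set.Icc 0 (2 - c)) := by
  have hg := levy_g_cont hα hC hAb hxc hyc
  have hshift : ContinuousOn (fun u : ℝ => u + c) (Set.Icc 0 (2 - c)) :=
    (continuous_id.add continuous_const).continuousOn
  have hgc : ContinuousOn (fun u => A 0 (u + c)) (Set.Icc 0 (2 - c)) :=
    hg.comp hshift (shift_maps hc0)
  have hgu : ContinuousOn (fun u => A 0 u) (Set.Icc 0 (2 - c)) :=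
    hg.mono (fun u hu => (incl_maps hc0) hu)
  have hxu : ContinuousOn x (Set.Icc 0 (2 - c)) := hxc.mono (fun u hu => (incl_maps hc0) hu)
  have hyu : ContinuousOn y (Set.Icc 0 (2 - c)) := hyc.mono (fun u hu => (incl_maps hc0) hu)
  have hxs : ContinuousOn (fun u => x (u + c)) (Set.Icc 0 (2 - c)) :=
    hxc.comp hshift (shift_maps hc0)
  have hys : ContinuousOn (fun u => y (u + c)) (Set.Icc 0 (2 - c)) :=
    hyc.comp hshift (shift_maps hc0)
  refine ContinuousOn.congr ?_ (fun u hu => levy_decomp hC ((incl_maps hc0) hu) ((shift_maps hc0) hu))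
  exact (hgc.sub hgu).add (continuousOn_const.mul ((hys.sub hyu).mul
    (continuousOn_const.sub hxu) |>.sub ((continuousOn_const.sub hyu).mul (hxs.sub hxu))))

lemma contF (hf : ContDiff ℝ 2 f)
    (hxc : ContinuousOn x (Set.Icc 0 2)) (hyc : ContinuousOn y (Set.Icc 0 2)) (hc0 : 0 ≤ c) :
    ContinuousOn (fun u => ((f (y u) + f (y (u + c))) / 2) * (x (u + c) - x u))
      (Set.Icc 0 (2 - c)) := by
  have hfc : Continuous f := hf.continuous
  have hshift : ContinuousOn (fun u : ℝ => u + c) (Set.Icc 0 (2 - c)) :=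
    (continuous_id.add continuous_const).continuousOn
  have hxu : ContinuousOn x (Set.Icc 0 (2 - c)) := hxc.mono (fun u hu => (incl_maps hc0) hu)
  have hyu : ContinuousOn y (Set.Icc 0 (2 - c)) := hyc.mono (fun u hu => (incl_maps hc0) hu)
  have hxs : ContinuousOn (fun u => x (u + c)) (Set.Icc 0 (2 - c)) :=
    hxc.comp hshift (shift_maps hc0)
  have hys : ContinuousOn (fun u => y (u + c)) (Set.Icc 0 (2 - c)) :=
    hyc.comp hshift (shift_maps hc0)
  exact (((hfc.comp_continuousOn hyu).add (hfc.comp_continuousOn hys)).div_const 2).mul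
    (hxs.sub hxu)

lemma contG (hα : 0 < α) (hf : ContDiff ℝ 2 f)
    (hC : ∀ r ∈ Set.Icc (0:ℝ) 2, ∀ s ∈ Set.Icc (0:ℝ) 2, ∀ t ∈ Set.Icc (0:ℝ) 2,
      A r s + A s t + A t r
        = -(1/2) * ((y t - y s) * (x r - x s) - (y r - y s) * (x t - x s)))
    {CA : ℝ}
    (hAb : ∀ s ∈ Set.Icc (0:ℝ) 2, ∀ t ∈ Set.Icc (0:ℝ) 2, |A s t| ≤ CA * |t - s| ^ (2*α))
    (hxc : ContinuousOn x (Set.Icc 0 2)) (hyc : ContinuousOn y (Set.Icc 0 2))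
    (hc0 : 0 ≤ c) (hc2 : c ≤ 2) :
    ContinuousOn (fun u => deriv f (y u) * A u (u + c)) (Set.Icc 0 (2 - c)) := by
  have hdf : Continuous (deriv f) := hf.continuous_deriv (by norm_num)
  have hyu : ContinuousOn y (Set.Icc 0 (2 - c)) := hyc.mono (fun u hu => (incl_maps hc0) hu)
  exact (hdf.comp_continuousOn hyu).mul (levy_slice_cont hα hC hAb hxc hyc hc0 hc2)

end SliceCont

section Delta

set_option maxHeartbeats 1000000 in
lemma delta_bound (α : ℝ) (hα0 : 0 < α) {x y : ℝ → ℝ} {A : ℝ → ℝ → ℝ} {f : ℝ → ℝ}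
    (hf : ContDiff ℝ 2 f) {Lx Ly CA K M2 : ℝ}
    (hxH : ∀ s ∈ Set.Icc (0:ℝ) 2, ∀ t ∈ Set.Icc (0:ℝ) 2, |x t - x s| ≤ Lx * |t - s| ^ α)
    (hyH : ∀ s ∈ Set.Icc (0:ℝ) 2, ∀ t ∈ Set.Icc (0:ℝ) 2, |y t - y s| ≤ Ly * |t - s| ^ α)
    (hChen : ∀ r ∈ Set.Icc (0:ℝ) 2, ∀ s ∈ Set.Icc (0:ℝ) 2, ∀ t ∈ Set.Icc (0:ℝ) 2,
      A r s + A s t + A t r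
        = -(1/2) * ((y t - y s) * (x r - x s) - (y r - y s) * (x t - x s)))
    (hAb : ∀ s ∈ Set.Icc (0:ℝ) 2, ∀ t ∈ Set.Icc (0:ℝ) 2, |A s t| ≤ CA * |t - s| ^ (2*α))
    (hyK : ∀ u ∈ Set.Icc (0:ℝ) 2, y u ∈ Set.Icc (-K) K)
    (hM2 : ∀ z ∈ Set.Icc (-K) K, |deriv (deriv f) z| ≤ M2)
    (hLx : 0 ≤ Lx) (hLy : 0 ≤ Ly) (hCA : 0 ≤ CA) (hM20 : 0 ≤ M2)
    {u h : ℝ} (hh : 0 < h) (hh1 : h ≤ 1) (hu0 : 0 ≤ u) (huh : u + h ≤ 2) :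
    abs (((f (y u) + f (y (u + h/2))) / 2) * (x (u + h/2) - x u) + deriv f (y u) * A u (u + h/2)
      + (((f (y (u + h/2)) + f (y (u + h/2 + h/2))) / 2) * (x (u + h/2 + h/2) - x (u + h/2))
          + deriv f (y (u + h/2)) * A (u + h/2) (u + h/2 + h/2))
      - (((f (y u) + f (y (u + h))) / 2) * (x (u + h) - x u) + deriv f (y u) * A u (u + h)))
      ≤ ((3/2) * M2 * Ly^2 * Lx + M2 * Ly * CA) * (h ^ α) ^ 3 := by
  have hsplit : u + h/2 + h/2 = u + h := by ring
  rw [hsplit]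
  set m := u + h/2 with hm
  set v := u + h with hv
  have hu2 : u ∈ Set.Icc (0:ℝ) 2 := ⟨hu0, by linarith⟩
  have hm2 : m ∈ Set.Icc (0:ℝ) 2 := ⟨by rw [hm]; linarith, by rw [hm]; linarith⟩
  have hv2 : v ∈ Set.Icc (0:ℝ) 2 := ⟨by rw [hv]; linarith, by rw [hv]; linarith⟩
  set P := h ^ α with hP
  have hP0 : 0 < P := Real.rpow_pos_of_pos hh α
  have hP1 : P ≤ 1 := Real.rpow_le_one hh.le hh1 hα0.le
  -- basic increment bounds
  have hhalf : (0:ℝ) < h/2 := by linarith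
  have habs : ∀ a b : ℝ, b - a = h/2 → |b - a| ^ α ≤ P := by
    intro a b hab
    rw [hab, abs_of_pos hhalf, hP]
    exact Real.rpow_le_rpow (by linarith) (by linarith) hα0.le
  have hym : |y m - y u| ≤ Ly * P := by
    refine (hyH u hu2 m hm2).trans ?_
    exact mul_le_mul_of_nonneg_left (habs u m (by rw [hm]; ring)) hLy
  have hyv : |y v - y m| ≤ Ly * P := by
    refine (hyH m hm2 v hv2).trans ?_
    exact mul_le_mul_of_nonneg_left (habs m v (by rw [hm, hv]; ring)) hLy
  have hxm : |x m - x u| ≤ Lx * P := by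
    refine (hxH u hu2 m hm2).trans ?_
    exact mul_le_mul_of_nonneg_left (habs u m (by rw [hm]; ring)) hLx
  have hxv : |x v - x m| ≤ Lx * P := by
    refine (hxH m hm2 v hv2).trans ?_
    exact mul_le_mul_of_nonneg_left (habs m v (by rw [hm, hv]; ring)) hLx
  have hAmv : |A m v| ≤ CA * P^2 := by
    refine (hAb m hm2 v hv2).trans ?_
    have h1 : |v - m| ^ (2*α) ≤ P^2 := by
      have e1 : |v - m| = h/2 := by rw [hm, hv, show u + h - (u + h/2) = h/2 by ring,
        abs_of_pos hhalf]
      rw [e1, hP]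
      have e2 : (h/2) ^ (2*α) ≤ h ^ (2*α) := Real.rpow_le_rpow (by linarith) (by linarith)
        (by linarith)
      refine e2.trans ?_
      rw [show 2*α = α + α by ring, Real.rpow_add hh, sq]
    exact mul_le_mul_of_nonneg_left h1 hCA
  -- Taylor bounds
  have hyu' := hyK u hu2
  have hym' := hyK m hm2
  have hyv' := hyK v hv2
  have sqb : ∀ a b : ℝ, |b - a| ≤ Ly * P → (b - a)^2 ≤ Ly^2 * P^2 := by
    intro a b hab
    calc (b - a)^2 = |b - a|^2 := (sq_abs _).symm
      _ ≤ (Ly * P)^2 := pow_le_pow_left₀ (abs_nonneg _) hab 2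
      _ = Ly^2 * P^2 := by ring
  have hR1 : |f (y m) - f (y u) - deriv f (y u) * (y m - y u)| ≤ M2 * (Ly^2 * P^2) := by
    refine (taylor_bd hf hM2 hyu' hym').trans ?_
    exact mul_le_mul_of_nonneg_left (sqb (y u) (y m) hym) hM20
  have hR2' : |f (y v) - f (y m) - deriv f (y m) * (y v - y m)| ≤ M2 * (Ly^2 * P^2) := by
    refine (taylor_bd hf hM2 hym' hyv').trans ?_
    exact mul_le_mul_of_nonneg_left (sqb (y m) (y v) hyv) hM20
  have hdf : |deriv f (y m) - deriv f (y u)| ≤ M2 * (Ly * P) := by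
    refine (derivf_lip hf hM2 hyu' hym').trans ?_
    exact mul_le_mul_of_nonneg_left hym hM20
  have hR2 : |f (y v) - f (y m) - deriv f (y u) * (y v - y m)| ≤ 2 * M2 * (Ly^2 * P^2) := by
    have e : f (y v) - f (y m) - deriv f (y u) * (y v - y m)
        = (f (y v) - f (y m) - deriv f (y m) * (y v - y m))
          + (deriv f (y m) - deriv f (y u)) * (y v - y m) := by ring
    rw [e]
    refine (abs_add_le _ _).trans ?_
    have h2 : |(deriv f (y m) - deriv f (y u)) * (y v - y m)| ≤ M2 * (Ly * P) * (Ly * P) := by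
      rw [abs_mul]
      exact mul_le_mul hdf hyv (abs_nonneg _) (by positivity)
    have e2 : M2 * (Ly * P) * (Ly * P) = M2 * (Ly^2 * P^2) := by ring
    linarith
  -- Chen relation
  have chen := levy_chen hChen hu2 hm2 hv2
  -- algebraic identity
  set R1 := f (y m) - f (y u) - deriv f (y u) * (y m - y u) with hR1def
  set R2 := f (y v) - f (y m) - deriv f (y u) * (y v - y m) with hR2def
  have key : ((f (y u) + f (y m)) / 2) * (x m - x u) + deriv f (y u) * A u m
      + (((f (y m) + f (y v)) / 2) * (x v - x m) + deriv f (y m) * A m v)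
      - (((f (y u) + f (y v)) / 2) * (x v - x u) + deriv f (y u) * A u v)
      = (1/2) * R1 * (x v - x m) - (1/2) * R2 * (x m - x u)
        + (deriv f (y m) - deriv f (y u)) * A m v := by
    rw [hR1def, hR2def]
    linear_combination (deriv f (y u)) * chen
  rw [key]
  have t1 : |(1/2) * R1 * (x v - x m)| ≤ (1/2) * (M2 * (Ly^2 * P^2)) * (Lx * P) := by
    rw [abs_mul, abs_mul, abs_of_pos (by norm_num : (0:ℝ) < 1/2)]
    refine mul_le_mul (mul_le_mul le_rfl hR1 (abs_nonneg _) (by norm_num)) hxv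
      (abs_nonneg _) (by positivity)
  have t2 : |(1/2) * R2 * (x m - x u)| ≤ (1/2) * (2 * M2 * (Ly^2 * P^2)) * (Lx * P) := by
    rw [abs_mul, abs_mul, abs_of_pos (by norm_num : (0:ℝ) < 1/2)]
    refine mul_le_mul (mul_le_mul le_rfl hR2 (abs_nonneg _) (by norm_num)) hxm
      (abs_nonneg _) (by positivity)
  have t3 : |(deriv f (y m) - deriv f (y u)) * A m v| ≤ (M2 * (Ly * P)) * (CA * P^2) := by
    rw [abs_mul]
    exact mul_le_mul hdf hAmv (abs_nonneg _) (by positivity)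
  calc |(1/2) * R1 * (x v - x m) - (1/2) * R2 * (x m - x u)
        + (deriv f (y m) - deriv f (y u)) * A m v|
      ≤ |(1/2) * R1 * (x v - x m) - (1/2) * R2 * (x m - x u)|
          + |(deriv f (y m) - deriv f (y u)) * A m v| := abs_add_le _ _
    _ ≤ |(1/2) * R1 * (x v - x m)| + |(1/2) * R2 * (x m - x u)|
          + |(deriv f (y m) - deriv f (y u)) * A m v| := by
        have := abs_sub ((1/2) * R1 * (x v - x m)) ((1/2) * R2 * (x m - x u))
        linarith
    _ ≤ (1/2) * (M2 * (Ly^2 * P^2)) * (Lx * P) + (1/2) * (2 * M2 * (Ly^2 * P^2)) * (Lx * P)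
          + (M2 * (Ly * P)) * (CA * P^2) := by linarith
    _ = ((3/2) * M2 * Ly^2 * Lx + M2 * Ly * CA) * P ^ 3 := by ring

end Delta

lemma psi_bound (α : ℝ) (hα0 : 0 < α) {x y : ℝ → ℝ} {A : ℝ → ℝ → ℝ} {f : ℝ → ℝ}
    {Lx Ly CA K M0 M1 : ℝ}
    (hxH : ∀ s ∈ Set.Icc (0:ℝ) 2, ∀ t ∈ Set.Icc (0:ℝ) 2, |x t - x s| ≤ Lx * |t - s| ^ α)
    (hAb : ∀ s ∈ Set.Icc (0:ℝ) 2, ∀ t ∈ Set.Icc (0:ℝ) 2, |A s t| ≤ CA * |t - s| ^ (2*α))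
    (hyK : ∀ u ∈ Set.Icc (0:ℝ) 2, y u ∈ Set.Icc (-K) K)
    (hM0 : ∀ z ∈ Set.Icc (-K) K, |f z| ≤ M0)
    (hM1 : ∀ z ∈ Set.Icc (-K) K, |deriv f z| ≤ M1)
    (hLx : 0 ≤ Lx) (hCA : 0 ≤ CA) (hM00 : 0 ≤ M0) (hM10 : 0 ≤ M1)
    {u h : ℝ} (hh : 0 < h) (hh1 : h ≤ 1) (hu0 : 0 ≤ u) (huh : u + h/2 ≤ 2) :
    |((f (y u) + f (y (u + h/2))) / 2) * (x (u + h/2) - x u) + deriv f (y u) * A u (u + h/2)|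
      ≤ (M0 * Lx + M1 * CA) * h ^ α := by
  have hu2 : u ∈ Set.Icc (0:ℝ) 2 := ⟨hu0, by linarith⟩
  have hm2 : u + h/2 ∈ Set.Icc (0:ℝ) 2 := ⟨by linarith, huh⟩
  have hP0 : (0:ℝ) < h ^ α := Real.rpow_pos_of_pos hh α
  have hP1 : h ^ α ≤ 1 := Real.rpow_le_one hh.le hh1 hα0.le
  have habs : |u + h/2 - u| = h/2 := by
    rw [show u + h/2 - u = h/2 by ring, abs_of_pos (by linarith)]
  have hx1 : |x (u + h/2) - x u| ≤ Lx * h ^ α := by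
    refine (hxH u hu2 _ hm2).trans ?_
    refine mul_le_mul_of_nonneg_left ?_ hLx
    rw [habs]
    exact Real.rpow_le_rpow (by linarith) (by linarith) hα0.le
  have hA1 : |A u (u + h/2)| ≤ CA * h ^ α := by
    refine (hAb u hu2 _ hm2).trans ?_
    refine mul_le_mul_of_nonneg_left ?_ hCA
    rw [habs]
    have e1 : (h/2) ^ (2*α) ≤ h ^ (2*α) :=
      Real.rpow_le_rpow (by linarith) (by linarith) (by linarith)
    refine e1.trans ?_
    rw [show 2*α = α + α by ring, Real.rpow_add hh]
    nlinarith
  have hfavg : |(f (y u) + f (y (u + h/2))) / 2| ≤ M0 := by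
    have h1 := hM0 _ (hyK u hu2)
    have h2 := hM0 _ (hyK _ hm2)
    rw [abs_div, abs_two]
    rw [div_le_iff₀ (by norm_num : (0:ℝ) < 2)]
    calc |f (y u) + f (y (u + h/2))| ≤ |f (y u)| + |f (y (u + h/2))| := abs_add_le _ _
      _ ≤ M0 * 2 := by linarith
  have hfd : |deriv f (y u)| ≤ M1 := hM1 _ (hyK u hu2)
  calc |((f (y u) + f (y (u + h/2))) / 2) * (x (u + h/2) - x u)
        + deriv f (y u) * A u (u + h/2)|
      ≤ |((f (y u) + f (y (u + h/2))) / 2) * (x (u + h/2) - x u)|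
        + |deriv f (y u) * A u (u + h/2)| := abs_add_le _ _
    _ ≤ M0 * (Lx * h ^ α) + M1 * (CA * h ^ α) := by
        rw [abs_mul, abs_mul]
        exact add_le_add (mul_le_mul hfavg hx1 (abs_nonneg _) hM00)
          (mul_le_mul hfd hA1 (abs_nonneg _) hM10)
    _ = (M0 * Lx + M1 * CA) * h ^ α := by ring
set_option maxHeartbeats 2000000 in
theorem stmt_4 (α : ℝ) (hα : α ∈ Set.Ioo (1/3 : ℝ) 1)
    (x y : ℝ → ℝ) (hx : HolderOnIcc α 0 2 x) (hy : HolderOnIcc α 0 2 y)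
    (A : ℝ → ℝ → ℝ) (hA : IsLevyArea0 α x y A)
    (f : ℝ → ℝ) (hf : ContDiff ℝ 2 f) :
    ∃ C > 0, ∀ (n : ℕ), ∀ ε ∈ Set.Ioc (0:ℝ) 1,
      |Idyad x y A f (n + 1) ε - Idyad x y A f n ε|
        ≤ C * (ε / 2 ^ n) ^ min (3 * α - 1) α := by
  obtain ⟨hα13, hα1⟩ := hα
  have hα0 : (0:ℝ) < α := by linarith
  obtain ⟨Lx, hLx0, hxH⟩ := hx
  obtain ⟨Ly, hLy0, hyH⟩ := hy
  obtain ⟨hChen, CA, hCA0, hAb⟩ := hA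
  have hxc : ContinuousOn x (Set.Icc 0 2) := holder_continuousOn hα0 ⟨Lx, hLx0, hxH⟩
  have hyc : ContinuousOn y (Set.Icc 0 2) := holder_continuousOn hα0 ⟨Ly, hLy0, hyH⟩
  -- the range of y is contained in a compact interval
  set K := Ly * 2 ^ α + |y 0| with hK
  have h02 : (0:ℝ) ∈ Set.Icc (0:ℝ) 2 := ⟨le_refl 0, by norm_num⟩
  have hyK : ∀ u ∈ Set.Icc (0:ℝ) 2, y u ∈ Set.Icc (-K) K := by
    intro u hu
    have h1 := hyH 0 h02 u hu
    have h2 : |u - 0| ^ α ≤ 2 ^ α := by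
      apply Real.rpow_le_rpow (abs_nonneg _) _ hα0.le
      rw [sub_zero, abs_of_nonneg hu.1]; exact hu.2
    have h3 : |y u - y 0| ≤ Ly * 2 ^ α := h1.trans (mul_le_mul_of_nonneg_left h2 hLy0.le)
    have h4 : |y u| ≤ K := by
      calc |y u| = |(y u - y 0) + y 0| := by ring_nf
        _ ≤ |y u - y 0| + |y 0| := abs_add_le _ _
        _ ≤ K := by rw [hK]; linarith
    exact Set.mem_Icc.mpr (abs_le.mp h4)
  -- bounds for f and its derivatives on that interval
  have hcpt : IsCompact (Set.Icc (-K) K) := isCompact_Icc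
  have h1d : ContDiff ℝ 1 (deriv f) := by
    have h2 : (2 : WithTop ℕ∞) = 1 + 1 := by norm_num
    have hf' := hf; rw [h2] at hf'
    exact (contDiff_succ_iff_deriv.mp hf').2.2
  obtain ⟨M0, hM0n⟩ := hcpt.exists_bound_of_continuousOn hf.continuous.continuousOn
  obtain ⟨M1, hM1n⟩ := hcpt.exists_bound_of_continuousOn (h1d.continuous.continuousOn)
  obtain ⟨M2, hM2n⟩ :=
    hcpt.exists_bound_of_continuousOn ((h1d.continuous_deriv le_rfl).continuousOn)
  have hM0 : ∀ z ∈ Set.Icc (-K) K, |f z| ≤ M0 := fun z hz => by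
    simpa [Real.norm_eq_abs] using hM0n z hz
  have hM1 : ∀ z ∈ Set.Icc (-K) K, |deriv f z| ≤ M1 := fun z hz => by
    simpa [Real.norm_eq_abs] using hM1n z hz
  have hM2 : ∀ z ∈ Set.Icc (-K) K, |deriv (deriv f) z| ≤ M2 := fun z hz => by
    simpa [Real.norm_eq_abs] using hM2n z hz
  have hy0K : y 0 ∈ Set.Icc (-K) K := hyK 0 h02
  have hM00 : 0 ≤ M0 := (abs_nonneg _).trans (hM0 _ hy0K)
  have hM10 : 0 ≤ M1 := (abs_nonneg _).trans (hM1 _ hy0K)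
  have hM20 : 0 ≤ M2 := (abs_nonneg _).trans (hM2 _ hy0K)
  -- the constants
  set Cd := (3/2) * M2 * Ly^2 * Lx + M2 * Ly * CA with hCd
  set Cp := M0 * Lx + M1 * CA with hCp
  have hCd0 : 0 ≤ Cd := by rw [hCd]; positivity
  have hCp0 : 0 ≤ Cp := by rw [hCp]; positivity
  refine ⟨Cd + Cp + 1, by positivity, ?_⟩
  intro n ε hε
  obtain ⟨hε0, hε1⟩ := hε
  have h2n : (0:ℝ) < 2 ^ n := by positivity
  set h := ε / 2 ^ n with hh
  have hh0 : 0 < h := by rw [hh]; positivity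
  have hh1 : h ≤ 1 := by
    rw [hh, div_le_one h2n]
    calc ε ≤ 1 := hε1
      _ ≤ 2 ^ n := one_le_pow₀ (by norm_num)
  set T := ε * ((⌊1/ε⌋ : ℤ) : ℝ) with hT
  have hfl : (0:ℝ) ≤ ((⌊1/ε⌋ : ℤ) : ℝ) := by
    have h1 : (0:ℝ) ≤ 1/ε := by positivity
    exact_mod_cast Int.floor_nonneg.mpr h1
  have hT0 : 0 ≤ T := by rw [hT]; exact mul_nonneg hε0.le hfl
  have hT1 : T ≤ 1 := by
    rw [hT]
    have h2 : ((⌊1/ε⌋ : ℤ) : ℝ) ≤ 1/ε := Int.floor_le (1/ε)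
    calc ε * ((⌊1/ε⌋ : ℤ) : ℝ) ≤ ε * (1/ε) := by
          exact mul_le_mul_of_nonneg_left h2 hε0.le
      _ = 1 := by field_simp
  -- integrands
  set ψ : ℝ → ℝ := fun u =>
    ((f (y u) + f (y (u + h/2))) / 2) * (x (u + h/2) - x u)
      + deriv f (y u) * A u (u + h/2) with hψdef
  set χ : ℝ → ℝ := fun u =>
    ((f (y u) + f (y (u + h))) / 2) * (x (u + h) - x u)
      + deriv f (y u) * A u (u + h) with hχdef
  -- integrability
  have hIF : ∀ c : ℝ, 0 ≤ c → c ≤ 1 → ∀ p q : ℝ, p ∈ Set.Icc 0 (2 - c) →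
      q ∈ Set.Icc 0 (2 - c) →
      IntervalIntegrable (fun u => ((f (y u) + f (y (u + c))) / 2) * (x (u + c) - x u))
        MeasureTheory.volume p q := by
    intro c hc0 hc1 p q hp hq
    exact ((contF hf hxc hyc hc0).mono (Set.uIcc_subset_Icc hp hq)).intervalIntegrable
  have hIG : ∀ c : ℝ, 0 ≤ c → c ≤ 1 → ∀ p q : ℝ, p ∈ Set.Icc 0 (2 - c) →
      q ∈ Set.Icc 0 (2 - c) →
      IntervalIntegrable (fun u => deriv f (y u) * A u (u + c)) MeasureTheory.volume p q := by
    intro c hc0 hc1 p q hp hq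
    exact ((contG hα0 hf hChen hAb hxc hyc hc0 (by linarith)).mono
      (Set.uIcc_subset_Icc hp hq)).intervalIntegrable
  -- memberships
  have m0h : (0:ℝ) ∈ Set.Icc (0:ℝ) (2 - h/2) := ⟨le_refl 0, by linarith⟩
  have mhh : h/2 ∈ Set.Icc (0:ℝ) (2 - h/2) := ⟨by linarith, by linarith⟩
  have mTh : T ∈ Set.Icc (0:ℝ) (2 - h/2) := ⟨hT0, by linarith⟩
  have mThh : T + h/2 ∈ Set.Icc (0:ℝ) (2 - h/2) := ⟨by linarith, by linarith⟩
  have m0H : (0:ℝ) ∈ Set.Icc (0:ℝ) (2 - h) := ⟨le_refl 0, by linarith⟩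
  have mTH : T ∈ Set.Icc (0:ℝ) (2 - h) := ⟨hT0, by linarith⟩
  have hhalf0 : (0:ℝ) ≤ h/2 := by linarith
  have hhalf1 : h/2 ≤ 1 := by linarith
  have hIψ : ∀ p q : ℝ, p ∈ Set.Icc 0 (2 - h/2) → q ∈ Set.Icc 0 (2 - h/2) →
      IntervalIntegrable ψ MeasureTheory.volume p q := by
    intro p q hp hq
    exact (hIF (h/2) hhalf0 hhalf1 p q hp hq).add (hIG (h/2) hhalf0 hhalf1 p q hp hq)
  have hIχ : IntervalIntegrable χ MeasureTheory.volume 0 T :=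
    (hIF h hh0.le hh1 0 T m0H mTH).add (hIG h hh0.le hh1 0 T m0H mTH)
  have hIσ : IntervalIntegrable (fun u => ψ (u + h/2)) MeasureTheory.volume 0 T := by
    have h1 := (hIψ (h/2) (T + h/2) mhh mThh).comp_add_right (h/2)
    rw [sub_self, add_sub_cancel_right] at h1
    exact h1
  -- rewriting Idyad
  have hpre1 : (2:ℝ) ^ n * ε⁻¹ = h⁻¹ := by
    rw [hh]; field_simp
  have hpre2 : (2:ℝ) ^ (n+1) * ε⁻¹ = (h/2)⁻¹ := by
    rw [hh, pow_succ]
    field_simp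
  have hstep : ε / 2 ^ (n+1) = h/2 := by
    rw [hh, pow_succ]; ring
  have e1 : Idyad x y A f n ε = h⁻¹ * ∫ u in (0:ℝ)..T, χ u := by
    simp only [Idyad, hχdef]
    rw [intervalIntegral.integral_add (hIF h hh0.le hh1 0 T m0H mTH)
      (hIG h hh0.le hh1 0 T m0H mTH)]
    rw [← hh, ← hT, hpre1]
    ring
  have e2 : Idyad x y A f (n+1) ε = (h/2)⁻¹ * ∫ u in (0:ℝ)..T, ψ u := by
    simp only [Idyad, hψdef]
    rw [hstep, intervalIntegral.integral_add (hIF (h/2) hhalf0 hhalf1 0 T m0h mTh)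
      (hIG (h/2) hhalf0 hhalf1 0 T m0h mTh)]
    rw [← hT, hpre2]
    ring
  -- shift identity
  have hshift : (∫ u in (0:ℝ)..T, ψ (u + h/2)) = ∫ u in (h/2)..(T + h/2), ψ u := by
    have h1 := intervalIntegral.integral_comp_add_right (a := (0:ℝ)) (b := T) ψ (h/2)
    rw [zero_add] at h1
    exact h1
  have hadj1 : (∫ u in (0:ℝ)..(h/2), ψ u) + (∫ u in (h/2)..T, ψ u)
      = ∫ u in (0:ℝ)..T, ψ u :=
    intervalIntegral.integral_add_adjacent_intervals (hIψ 0 (h/2) m0h mhh) (hIψ (h/2) T mhh mTh)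
  have hadj2 : (∫ u in (h/2)..T, ψ u) + (∫ u in T..(T + h/2), ψ u)
      = ∫ u in (h/2)..(T + h/2), ψ u :=
    intervalIntegral.integral_add_adjacent_intervals (hIψ (h/2) T mhh mTh) (hIψ T (T + h/2) mTh mThh)
  have hD : (∫ u in (0:ℝ)..T, (ψ u + ψ (u + h/2) - χ u))
      = (∫ u in (0:ℝ)..T, ψ u) + (∫ u in (0:ℝ)..T, ψ (u + h/2)) - ∫ u in (0:ℝ)..T, χ u := by
    rw [intervalIntegral.integral_sub ((hIψ 0 T m0h mTh).add hIσ) hIχ,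
      intervalIntegral.integral_add (hIψ 0 T m0h mTh) hIσ]
  have hkey : 2 * (∫ u in (0:ℝ)..T, ψ u) - (∫ u in (0:ℝ)..T, χ u)
      = (∫ u in (0:ℝ)..T, (ψ u + ψ (u + h/2) - χ u))
        + (∫ u in (0:ℝ)..(h/2), ψ u) - ∫ u in T..(T + h/2), ψ u := by
    rw [hD, hshift]
    linarith
  -- bound on the main term
  have hbD : |∫ u in (0:ℝ)..T, (ψ u + ψ (u + h/2) - χ u)| ≤ Cd * (h ^ α) ^ 3 := by
    have hb : ∀ u ∈ Set.uIoc (0:ℝ) T, ‖ψ u + ψ (u + h/2) - χ u‖ ≤ Cd * (h ^ α) ^ 3 := by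
      intro u hu
      rw [Set.uIoc_of_le hT0] at hu
      obtain ⟨hu1, hu2⟩ := hu
      simp only [hψdef, hχdef, Real.norm_eq_abs, hCd]
      exact delta_bound α hα0 hf hxH hyH hChen hAb hyK hM2 hLx0.le hLy0.le hCA0.le hM20
        hh0 hh1 hu1.le (by linarith)
    have h1 := intervalIntegral.norm_integral_le_of_norm_le_const hb
    rw [Real.norm_eq_abs] at h1
    refine h1.trans ?_
    have h2 : |T - 0| ≤ 1 := by rw [sub_zero, abs_of_nonneg hT0]; exact hT1
    have h4 : (0:ℝ) ≤ Cd * (h ^ α) ^ 3 :=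
      mul_nonneg hCd0 (pow_nonneg (Real.rpow_nonneg hh0.le α) 3)
    have h3 : Cd * (h ^ α) ^ 3 * |T - 0| ≤ Cd * (h ^ α) ^ 3 * 1 :=
      mul_le_mul_of_nonneg_left h2 h4
    rw [mul_one] at h3
    exact h3
  -- bounds on the boundary terms
  have hψb : ∀ u : ℝ, 0 ≤ u → u + h/2 ≤ 2 → |ψ u| ≤ Cp * h ^ α := by
    intro u hu1 hu2
    simp only [hψdef, hCp]
    exact psi_bound (Ly := Ly) α hα0 hxH hAb hyK hM0 hM1 hLx0.le hCA0.le hM00 hM10 hh0 hh1 hu1 hu2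
  have hb1 : |∫ u in (0:ℝ)..(h/2), ψ u| ≤ Cp * h ^ α * (h/2) := by
    have hb : ∀ u ∈ Set.uIoc (0:ℝ) (h/2), ‖ψ u‖ ≤ Cp * h ^ α := by
      intro u hu
      rw [Set.uIoc_of_le hhalf0] at hu
      exact hψb u hu.1.le (by linarith [hu.2])
    have h1 := intervalIntegral.norm_integral_le_of_norm_le_const hb
    rw [Real.norm_eq_abs] at h1
    refine h1.trans ?_
    rw [sub_zero, abs_of_nonneg hhalf0]
  have hb2 : |∫ u in T..(T + h/2), ψ u| ≤ Cp * h ^ α * (h/2) := by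
    have hb : ∀ u ∈ Set.uIoc T (T + h/2), ‖ψ u‖ ≤ Cp * h ^ α := by
      intro u hu
      rw [Set.uIoc_of_le (by linarith : T ≤ T + h/2)] at hu
      exact hψb u (by linarith [hu.1]) (by linarith [hu.2])
    have h1 := intervalIntegral.norm_integral_le_of_norm_le_const hb
    rw [Real.norm_eq_abs] at h1
    refine h1.trans ?_
    rw [show T + h/2 - T = h/2 by ring, abs_of_nonneg hhalf0]
  -- put everything together
  have hPbd : |2 * (∫ u in (0:ℝ)..T, ψ u) - (∫ u in (0:ℝ)..T, χ u)|
      ≤ Cd * (h ^ α) ^ 3 + Cp * h ^ α * h := by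
    rw [hkey]
    calc |(∫ u in (0:ℝ)..T, (ψ u + ψ (u + h/2) - χ u))
          + (∫ u in (0:ℝ)..(h/2), ψ u) - ∫ u in T..(T + h/2), ψ u|
        ≤ |(∫ u in (0:ℝ)..T, (ψ u + ψ (u + h/2) - χ u))
            + (∫ u in (0:ℝ)..(h/2), ψ u)| + |∫ u in T..(T + h/2), ψ u| := abs_sub _ _
      _ ≤ |∫ u in (0:ℝ)..T, (ψ u + ψ (u + h/2) - χ u)|
            + |∫ u in (0:ℝ)..(h/2), ψ u| + |∫ u in T..(T + h/2), ψ u| := by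
          have := abs_add_le (∫ u in (0:ℝ)..T, (ψ u + ψ (u + h/2) - χ u))
            (∫ u in (0:ℝ)..(h/2), ψ u)
          linarith
      _ ≤ Cd * (h ^ α) ^ 3 + Cp * h ^ α * (h/2) + Cp * h ^ α * (h/2) := by
          linarith
      _ = Cd * (h ^ α) ^ 3 + Cp * h ^ α * h := by ring
  have ediff : Idyad x y A f (n+1) ε - Idyad x y A f n ε
      = h⁻¹ * (2 * (∫ u in (0:ℝ)..T, ψ u) - (∫ u in (0:ℝ)..T, χ u)) := by
    rw [e1, e2]
    field_simp
  rw [ediff, abs_mul, abs_of_pos (inv_pos.mpr hh0)]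
  -- final exponent arithmetic
  set θ := min (3 * α - 1) α with hθ
  have hθ3 : θ ≤ 3 * α - 1 := min_le_left _ _
  have hθα : θ ≤ α := min_le_right _ _
  have hP0 : (0:ℝ) < h ^ α := Real.rpow_pos_of_pos hh0 α
  have hPθ : (0:ℝ) < h ^ θ := Real.rpow_pos_of_pos hh0 θ
  have hexp1 : (h ^ α) ^ 3 * h⁻¹ = h ^ (3 * α - 1) := by
    rw [← Real.rpow_natCast (h ^ α) 3, ← Real.rpow_mul hh0.le]
    rw [show h⁻¹ = h ^ (-1 : ℝ) by rw [Real.rpow_neg_one]]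
    rw [← Real.rpow_add hh0]
    norm_num
    ring_nf
  have hexp2 : h ^ (3 * α - 1) ≤ h ^ θ :=
    Real.rpow_le_rpow_of_exponent_ge hh0 hh1 hθ3
  have hexp3 : h ^ α ≤ h ^ θ :=
    Real.rpow_le_rpow_of_exponent_ge hh0 hh1 hθα
  calc h⁻¹ * |2 * (∫ u in (0:ℝ)..T, ψ u) - (∫ u in (0:ℝ)..T, χ u)|
      ≤ h⁻¹ * (Cd * (h ^ α) ^ 3 + Cp * h ^ α * h) :=
        mul_le_mul_of_nonneg_left hPbd (inv_pos.mpr hh0).le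
    _ = Cd * ((h ^ α) ^ 3 * h⁻¹) + Cp * h ^ α := by field_simp
    _ = Cd * h ^ (3 * α - 1) + Cp * h ^ α := by rw [hexp1]
    _ ≤ Cd * h ^ θ + Cp * h ^ θ :=
        add_le_add (mul_le_mul_of_nonneg_left hexp2 hCd0) (mul_le_mul_of_nonneg_left hexp3 hCp0)
    _ = (Cd + Cp) * h ^ θ := by ring
    _ ≤ (Cd + Cp + 1) * h ^ θ := mul_le_mul_of_nonneg_right (by linarith) hPθ.le
end
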